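/- arXiv:1001.3557 — 4 statements merged into one kernel-verified Lean document; each statement's English description precedes it below -/
import Mathlib

section
/- Let α : [0,T] → (0,∞) be measurable with α² integrable, define A(t) = ∫_0^t α(u)² du, and let r > 0. Then for any measurable g : [0,T] → ℝ with g²/α² integrable and any s ∈ [0,T]: (∫_s^T g(u) du)² ≤ (1/r) e^{-r A(s)} ∫_s^T e^{r A(u)} g(u)²/α(u)² du. -/
open MeasureTheory
open Set intervalIntegral Filter


lemma key_eps (T r : ℝ) (hr : 0 < r) (α : ℝ → ℝ) (hα : Measurable α)
    (hαnn : ∀ u, 0 ≤ α u)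
    (hα2 : IntegrableOn (fun u => (α u) ^ 2) (Set.Icc 0 T))
    (s : ℝ) (hs0 : 0 ≤ s) (hsT : s ≤ T) {ε : ℝ} (hε : 0 < ε) :
    ∫ u in Set.Ioc s T, Real.exp (-(r * ∫ v in (0:ℝ)..u, (α v)^2)) * (α u) ^ 2 ≤
      Real.exp (r * ε) *
        ((1 / r) * Real.exp (r * ε) * Real.exp (-(r * ∫ v in (0:ℝ)..s, (α v)^2)) + ε) := by
  have hT : (0:ℝ) ≤ T := hs0.trans hsT
  set A : ℝ → ℝ := fun t => ∫ v in (0:ℝ)..t, (α v)^2 with hAdef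
  -- continuous approximation
  set f₀ : ℝ → ℝ := (Set.Icc (0:ℝ) T).indicator (fun u => (α u)^2) with hf₀
  have hf₀int : Integrable f₀ := by
    rw [hf₀, integrable_indicator_iff measurableSet_Icc]
    exact hα2
  obtain ⟨c, -, hc, hccont, hcint⟩ := hf₀int.exists_hasCompactSupport_integral_sub_le hε
  set β : ℝ → ℝ := fun u => max (c u) 0 with hβ
  have hβcont : Continuous β := hccont.max continuous_const
  have hβnn : ∀ u, 0 ≤ β u := fun u => le_max_right _ _
  have hdiff : ∀ u ∈ Set.Icc (0:ℝ) T, |(α u)^2 - β u| ≤ ‖f₀ u - c u‖ := by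
    intro u hu
    rw [hf₀, Set.indicator_of_mem hu, Real.norm_eq_abs]
    rcases le_or_gt (c u) 0 with h | h
    · rw [hβ]; simp only [max_eq_right h]
      rw [sub_zero, abs_of_nonneg (sq_nonneg _), abs_of_nonneg (by nlinarith [sq_nonneg (α u)])]
      nlinarith [sq_nonneg (α u)]
    · rw [hβ]; simp only [max_eq_left h.le]; exact le_rfl
  have hβint : IntegrableOn β (Set.Icc 0 T) := hβcont.integrableOn_Icc
  have hdint : IntegrableOn (fun u => |(α u)^2 - β u|) (Set.Icc 0 T) :=
    (hα2.sub hβint).abs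
  have hδ : ∫ u in Set.Icc (0:ℝ) T, |(α u)^2 - β u| ≤ ε := by
    calc ∫ u in Set.Icc (0:ℝ) T, |(α u)^2 - β u|
        ≤ ∫ u in Set.Icc (0:ℝ) T, ‖f₀ u - c u‖ :=
          setIntegral_mono_on hdint ((hf₀int.sub hcint).norm.integrableOn)
            measurableSet_Icc hdiff
      _ ≤ ∫ u, ‖f₀ u - c u‖ :=
          setIntegral_le_integral (hf₀int.sub hcint).norm
            (Filter.Eventually.of_forall fun u => norm_nonneg _)
      _ ≤ ε := hc
  set B : ℝ → ℝ := fun t => ∫ v in (0:ℝ)..t, β v with hBdef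
  have hB : ∀ t, HasDerivAt B (β t) t := fun t =>
    (hβcont.integral_hasStrictDerivAt 0 t).hasDerivAt
  have hBcont : Continuous B := continuous_iff_continuousAt.2 fun t => (hB t).continuousAt
  have hBnn : ∀ t ∈ Set.Icc (0:ℝ) T, 0 ≤ B t := fun t ht =>
    intervalIntegral.integral_nonneg ht.1 fun u _ => hβnn u
  have hAnn : ∀ t ∈ Set.Icc (0:ℝ) T, 0 ≤ A t := fun t ht =>
    intervalIntegral.integral_nonneg ht.1 fun u _ => sq_nonneg _
  -- |A - B| ≤ ε on [0, T]
  have hAB : ∀ t ∈ Set.Icc (0:ℝ) T, |A t - B t| ≤ ε := by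
    intro t ht
    have hα2t : IntervalIntegrable (fun u => (α u)^2) volume 0 t := by
      apply IntegrableOn.intervalIntegrable
      rw [Set.uIcc_of_le ht.1]
      exact hα2.mono_set (Set.Icc_subset_Icc le_rfl ht.2)
    have hβt : IntervalIntegrable β volume 0 t := hβcont.intervalIntegrable _ _
    have : A t - B t = ∫ v in (0:ℝ)..t, ((α v)^2 - β v) :=
      (intervalIntegral.integral_sub hα2t hβt).symm
    rw [this]
    calc |∫ v in (0:ℝ)..t, ((α v)^2 - β v)|
        ≤ ∫ v in (0:ℝ)..t, |(α v)^2 - β v| :=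
          intervalIntegral.abs_integral_le_integral_abs ht.1
      _ = ∫ v in Set.Ioc (0:ℝ) t, |(α v)^2 - β v| :=
          intervalIntegral.integral_of_le ht.1
      _ ≤ ∫ v in Set.Icc (0:ℝ) T, |(α v)^2 - β v| := by
          apply setIntegral_mono_set hdint
            (Filter.Eventually.of_forall fun v => abs_nonneg _)
          exact (Set.Ioc_subset_Icc_self.trans (Set.Icc_subset_Icc le_rfl ht.2)).eventuallyLE
      _ ≤ ε := hδ
  -- FTC for the smooth approximation
  have hexpB : Continuous (fun u => Real.exp (-(r * B u))) :=
    Real.continuous_exp.comp (continuous_const.mul hBcont).neg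
  have hFTC : ∫ u in s..T, Real.exp (-(r * B u)) * β u
      = (1/r) * Real.exp (-(r * B s)) - (1/r) * Real.exp (-(r * B T)) := by
    have hF : ∀ t, HasDerivAt (fun t => -(1/r) * Real.exp (-(r * B t)))
        (Real.exp (-(r * B t)) * β t) t := by
      intro t
      have h1 : HasDerivAt (fun t => -(r * B t)) (-(r * β t)) t := ((hB t).const_mul r).neg
      have h3 := h1.exp.const_mul (-(1/r))
      convert h3 using 1
      · rfl
      · rfl
      field_simp
    rw [intervalIntegral.integral_eq_sub_of_hasDerivAt (fun x _ => hF x)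
      ((hexpB.mul hβcont).intervalIntegrable _ _)]
    ring
  -- integrability and measurability facts
  have hsub : Set.Ioc s T ⊆ Set.Icc 0 T := fun u hu => ⟨hs0.trans hu.1.le, hu.2⟩
  have hAcont : ContinuousOn A (Set.Icc 0 T) := by
    have := intervalIntegral.continuousOn_primitive_interval (a := (0:ℝ)) (b := T)
      (μ := volume) (f := fun v => (α v)^2) (by rw [Set.uIcc_of_le hT]; exact hα2)
    rwa [Set.uIcc_of_le hT] at this
  have hexpAm : AEStronglyMeasurable (fun u => Real.exp (-(r * A u)))
      (volume.restrict (Set.Ioc s T)) := by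
    refine Real.continuous_exp.comp_aestronglyMeasurable ?_
    exact (((hAcont.mono hsub).aestronglyMeasurable measurableSet_Ioc).const_mul r).neg
  have hα2m : AEStronglyMeasurable (fun u => (α u)^2)
      (volume.restrict (Set.Ioc s T)) := (hα.pow_const 2).aestronglyMeasurable
  have hfi : IntegrableOn (fun u => Real.exp (-(r * A u)) * (α u)^2) (Set.Ioc s T) := by
    refine Integrable.mono' (hα2.mono_set hsub) (hexpAm.mul hα2m) ?_
    filter_upwards [ae_restrict_mem measurableSet_Ioc] with u hu
    have hA0 : 0 ≤ A u := hAnn u (hsub hu)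
    have he1 : Real.exp (-(r * A u)) ≤ 1 := by
      rw [Real.exp_le_one_iff]; nlinarith
    rw [Real.norm_eq_abs, abs_of_nonneg (by positivity)]
    nlinarith [sq_nonneg (α u), Real.exp_pos (-(r * A u))]
  have hBi : IntegrableOn (fun u => Real.exp (-(r * B u)) * (α u)^2) (Set.Ioc s T) := by
    refine Integrable.mono' (hα2.mono_set hsub) (hexpB.aestronglyMeasurable.mul hα2m) ?_
    filter_upwards [ae_restrict_mem measurableSet_Ioc] with u hu
    have hB0 : 0 ≤ B u := hBnn u (hsub hu)
    have he1 : Real.exp (-(r * B u)) ≤ 1 := by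
      rw [Real.exp_le_one_iff]; nlinarith
    rw [Real.norm_eq_abs, abs_of_nonneg (by positivity)]
    nlinarith [sq_nonneg (α u), Real.exp_pos (-(r * B u))]
  -- the chain of estimates
  have step1 : ∫ u in Set.Ioc s T, Real.exp (-(r * A u)) * (α u)^2
      ≤ Real.exp (r * ε) * ∫ u in Set.Ioc s T, Real.exp (-(r * B u)) * (α u)^2 := by
    rw [← MeasureTheory.integral_const_mul]
    refine setIntegral_mono_on hfi (hBi.const_mul _) measurableSet_Ioc ?_
    intro u hu
    have habs := hAB u (hsub hu)
    have h1 : -(r * A u) ≤ r * ε + -(r * B u) := by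
      rw [abs_le] at habs; nlinarith
    have h2 : Real.exp (-(r * A u)) ≤ Real.exp (r * ε) * Real.exp (-(r * B u)) := by
      rw [← Real.exp_add]; exact Real.exp_le_exp.2 h1
    calc Real.exp (-(r * A u)) * (α u)^2
        ≤ (Real.exp (r * ε) * Real.exp (-(r * B u))) * (α u)^2 :=
          mul_le_mul_of_nonneg_right h2 (sq_nonneg _)
      _ = Real.exp (r * ε) * (Real.exp (-(r * B u)) * (α u)^2) := by ring
  have step2 : ∫ u in Set.Ioc s T, Real.exp (-(r * B u)) * (α u)^2
      ≤ (1/r) * Real.exp (-(r * B s)) + ε := by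
    have hβi : IntegrableOn (fun u => Real.exp (-(r * B u)) * β u) (Set.Ioc s T) :=
      (hexpB.mul hβcont).integrableOn_Ioc
    have hdi : IntegrableOn (fun u => |(α u)^2 - β u|) (Set.Ioc s T) := hdint.mono_set hsub
    calc ∫ u in Set.Ioc s T, Real.exp (-(r * B u)) * (α u)^2
        ≤ ∫ u in Set.Ioc s T, (Real.exp (-(r * B u)) * β u + |(α u)^2 - β u|) := by
          refine setIntegral_mono_on hBi (hβi.add hdi) measurableSet_Ioc ?_
          intro u hu
          have hB0 : 0 ≤ B u := hBnn u (hsub hu)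
          have he1 : Real.exp (-(r * B u)) ≤ 1 := by
            rw [Real.exp_le_one_iff]; nlinarith
          have he0 : 0 < Real.exp (-(r * B u)) := Real.exp_pos _
          nlinarith [le_abs_self ((α u)^2 - β u), neg_abs_le ((α u)^2 - β u)]
      _ = (∫ u in Set.Ioc s T, Real.exp (-(r * B u)) * β u)
            + ∫ u in Set.Ioc s T, |(α u)^2 - β u| := integral_add hβi hdi
      _ ≤ (1/r) * Real.exp (-(r * B s)) + ε := by
          gcongr
          · rw [← intervalIntegral.integral_of_le hsT, hFTC]
            have : 0 ≤ (1/r) * Real.exp (-(r * B T)) := by positivity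
            linarith
          · calc ∫ u in Set.Ioc s T, |(α u)^2 - β u|
                ≤ ∫ u in Set.Icc (0:ℝ) T, |(α u)^2 - β u| :=
                  setIntegral_mono_set hdint
                    (Filter.Eventually.of_forall fun v => abs_nonneg _) hsub.eventuallyLE
              _ ≤ ε := hδ
  have step3 : Real.exp (-(r * B s)) ≤ Real.exp (r * ε) * Real.exp (-(r * A s)) := by
    have habs := hAB s ⟨hs0, hsT⟩
    rw [← Real.exp_add]
    refine Real.exp_le_exp.2 ?_
    rw [abs_le] at habs; nlinarith
  calc ∫ u in Set.Ioc s T, Real.exp (-(r * A u)) * (α u)^2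
      ≤ Real.exp (r * ε) * ∫ u in Set.Ioc s T, Real.exp (-(r * B u)) * (α u)^2 := step1
    _ ≤ Real.exp (r * ε) * ((1/r) * Real.exp (-(r * B s)) + ε) := by
        refine mul_le_mul_of_nonneg_left step2 (Real.exp_pos _).le
    _ ≤ Real.exp (r * ε) * ((1/r) * Real.exp (r * ε) * Real.exp (-(r * A s)) + ε) := by
        have h1r : (0:ℝ) ≤ 1/r := by positivity
        refine mul_le_mul_of_nonneg_left ?_ (Real.exp_pos _).le
        have := mul_le_mul_of_nonneg_left step3 h1r
        linarith [this]

lemma key_ineq (T r : ℝ) (hr : 0 < r) (α : ℝ → ℝ) (hα : Measurable α)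
    (hαnn : ∀ u, 0 ≤ α u)
    (hα2 : IntegrableOn (fun u => (α u) ^ 2) (Set.Icc 0 T))
    (s : ℝ) (hs0 : 0 ≤ s) (hsT : s ≤ T) :
    ∫ u in Set.Ioc s T, Real.exp (-(r * ∫ v in (0:ℝ)..u, (α v)^2)) * (α u) ^ 2 ≤
      (1 / r) * Real.exp (-(r * ∫ v in (0:ℝ)..s, (α v)^2)) := by
  set E : ℝ := Real.exp (-(r * ∫ v in (0:ℝ)..s, (α v)^2)) with hE
  set L : ℝ := ∫ u in Set.Ioc s T, Real.exp (-(r * ∫ v in (0:ℝ)..u, (α v)^2)) * (α u) ^ 2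
  have h : ∀ ε ∈ Set.Ioi (0:ℝ),
      L ≤ Real.exp (r * ε) * ((1 / r) * Real.exp (r * ε) * E + ε) := fun ε hε =>
    key_eps T r hr α hα hαnn hα2 s hs0 hsT hε
  have hcont : Continuous (fun ε : ℝ => Real.exp (r * ε) * ((1 / r) * Real.exp (r * ε) * E + ε)) := by
    continuity
  have htend : Filter.Tendsto (fun ε : ℝ => Real.exp (r * ε) * ((1 / r) * Real.exp (r * ε) * E + ε))
      (nhdsWithin 0 (Set.Ioi 0)) (nhds ((1 / r) * E)) := by
    have := (hcont.tendsto 0).mono_left (nhdsWithin_le_nhds (s := Set.Ioi (0:ℝ)))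
    simpa using this
  exact ge_of_tendsto htend (eventually_mem_nhdsWithin.mono h)


theorem stmt3 (T r : ℝ) (hT : 0 ≤ T) (hr : 0 < r) (α g : ℝ → ℝ)
    (hα : Measurable α) (hαpos : ∀ u, 0 < α u)
    (hα2 : IntegrableOn (fun u => (α u) ^ 2) (Set.Icc 0 T))
    (A : ℝ → ℝ) (hA : ∀ t, A t = ∫ u in (0:ℝ)..t, (α u) ^ 2)
    (hg : Measurable g)
    (hgi : IntegrableOn
      (fun u => Real.exp (r * A u) * (g u) ^ 2 / (α u) ^ 2) (Set.Icc 0 T))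
    (s : ℝ) (hs : s ∈ Set.Icc 0 T) :
    (∫ u in s..T, g u) ^ 2 ≤
      (1 / r) * Real.exp (-r * A s) *
        ∫ u in s..T, Real.exp (r * A u) * (g u) ^ 2 / (α u) ^ 2 := by
  obtain ⟨hs0, hsT⟩ := hs
  have hsub : Set.Ioc s T ⊆ Set.Icc 0 T := fun u hu => ⟨hs0.trans hu.1.le, hu.2⟩
  set μ := volume.restrict (Set.Ioc s T) with hμ
  -- the key inequality with `A` in place of the primitive
  have hkey : ∫ u in Set.Ioc s T, Real.exp (-(r * A u)) * (α u) ^ 2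
      ≤ (1 / r) * Real.exp (-(r * A s)) := by
    have := key_ineq T r hr α hα (fun u => (hαpos u).le) hα2 s hs0 hsT
    simp only [← hA] at this
    exact this
  -- measurability
  have hAcont : ContinuousOn A (Set.Icc 0 T) := by
    have hc := intervalIntegral.continuousOn_primitive_interval (a := (0:ℝ)) (b := T)
      (μ := volume) (f := fun v => (α v) ^ 2) (by rw [Set.uIcc_of_le hT]; exact hα2)
    rw [Set.uIcc_of_le hT] at hc
    exact hc.congr fun t _ => hA t
  have hAm : AEStronglyMeasurable A μ :=
    (hAcont.mono hsub).aestronglyMeasurable measurableSet_Ioc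
  -- the two factors
  set f : ℝ → ℝ := fun u => Real.exp (-(r * A u) / 2) * α u with hf
  set q : ℝ → ℝ := fun u => Real.exp (r * A u / 2) * |g u| / α u with hq
  have hfnn : ∀ u, 0 ≤ f u := fun u => mul_nonneg (Real.exp_pos _).le (hαpos u).le
  have hqnn : ∀ u, 0 ≤ q u := fun u =>
    div_nonneg (mul_nonneg (Real.exp_pos _).le (abs_nonneg _)) (hαpos u).le
  have hfq : ∀ u, f u * q u = |g u| := by
    intro u
    have hαne : α u ≠ 0 := (hαpos u).ne'
    have he : Real.exp (-(r * A u) / 2) * Real.exp (r * A u / 2) = 1 := by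
      rw [← Real.exp_add]
      ring_nf
      exact Real.exp_zero
    show Real.exp (-(r * A u) / 2) * α u * (Real.exp (r * A u / 2) * |g u| / α u) = |g u|
    rw [mul_div_assoc', div_eq_iff hαne]
    calc Real.exp (-(r * A u) / 2) * α u * (Real.exp (r * A u / 2) * |g u|)
        = (Real.exp (-(r * A u) / 2) * Real.exp (r * A u / 2)) * (α u * |g u|) := by ring
      _ = α u * |g u| := by rw [he, one_mul]
      _ = |g u| * α u := by ring
  have hexpsq : ∀ x : ℝ, Real.exp (x / 2) ^ 2 = Real.exp x := by
    intro x
    rw [sq, ← Real.exp_add, add_halves]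
  have hf2 : ∀ u, f u ^ 2 = Real.exp (-(r * A u)) * (α u) ^ 2 := by
    intro u
    rw [hf, mul_pow, hexpsq]
  have hq2 : ∀ u, q u ^ 2 = Real.exp (r * A u) * (g u) ^ 2 / (α u) ^ 2 := by
    intro u
    rw [hq, div_pow, mul_pow, hexpsq, sq_abs]
  -- integrability of the squares
  have hfim : AEStronglyMeasurable f μ := by
    refine AEStronglyMeasurable.mul ?_ hα.aestronglyMeasurable
    have : AEStronglyMeasurable (fun u => -(r * A u) / 2) μ :=
      (hAm.const_mul (-r/2)).congr (Filter.Eventually.of_forall fun u => by ring)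
    exact Real.continuous_exp.comp_aestronglyMeasurable this
  have hqim : AEStronglyMeasurable q μ := by
    have hAe : AEStronglyMeasurable (fun u => Real.exp (r * A u / 2)) μ := by
      have : AEStronglyMeasurable (fun u => r * A u / 2) μ :=
        (hAm.const_mul (r/2)).congr (Filter.Eventually.of_forall fun u => by ring)
      exact Real.continuous_exp.comp_aestronglyMeasurable this
    have : AEStronglyMeasurable (fun u => Real.exp (r * A u / 2) * |g u| * (α u)⁻¹) μ :=
      (hAe.mul hg.abs.aestronglyMeasurable).mul hα.inv.aestronglyMeasurable
    exact this.congr (Filter.Eventually.of_forall fun u => by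
      simp only [hq, div_eq_mul_inv])
  have hf2i : Integrable (fun u => f u ^ 2) μ := by
    have hfi : IntegrableOn (fun u => Real.exp (-(r * A u)) * (α u) ^ 2) (Set.Ioc s T) := by
      refine Integrable.mono' (hα2.mono_set hsub)
        ((Real.continuous_exp.comp_aestronglyMeasurable ((hAm.const_mul r).neg)).mul
          (hα.pow_const 2).aestronglyMeasurable) ?_
      filter_upwards [ae_restrict_mem measurableSet_Ioc] with u hu
      have hA0 : 0 ≤ A u := by
        rw [hA u]
        exact intervalIntegral.integral_nonneg (hs0.trans hu.1.le) fun v _ => sq_nonneg _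
      have he1 : Real.exp (-(r * A u)) ≤ 1 := by
        rw [Real.exp_le_one_iff]; nlinarith
      rw [Real.norm_eq_abs, abs_of_nonneg (by positivity)]
      nlinarith [sq_nonneg (α u), Real.exp_pos (-(r * A u))]
    exact (integrable_congr (Filter.Eventually.of_forall fun u => (hf2 u).symm)).1 hfi
  have hq2i : Integrable (fun u => q u ^ 2) μ := by
    have := hgi.mono_set hsub
    exact (integrable_congr (Filter.Eventually.of_forall fun u => (hq2 u).symm)).1 this
  have hfmem : MemLp f (ENNReal.ofReal 2) μ := by
    rw [show ENNReal.ofReal 2 = 2 by norm_num [ENNReal.ofReal_ofNat]]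
    exact (memLp_two_iff_integrable_sq hfim).2 hf2i
  have hqmem : MemLp q (ENNReal.ofReal 2) μ := by
    rw [show ENNReal.ofReal 2 = 2 by norm_num [ENNReal.ofReal_ofNat]]
    exact (memLp_two_iff_integrable_sq hqim).2 hq2i
  have hconj : Real.HolderConjugate 2 2 := Real.HolderConjugate.two_two
  have hcs := integral_mul_le_Lp_mul_Lq_of_nonneg hconj
    (Filter.Eventually.of_forall hfnn) (Filter.Eventually.of_forall hqnn) hfmem hqmem
  -- rewrite rpow as pow inside
  have hrw : ∀ (φ : ℝ → ℝ), (∀ u, 0 ≤ φ u) →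
      (∫ u, φ u ^ (2:ℝ) ∂μ) = ∫ u, φ u ^ 2 ∂μ := by
    intro φ hφ
    refine integral_congr_ae (Filter.Eventually.of_forall fun u => ?_)
    show φ u ^ (2:ℝ) = φ u ^ 2
    rw [← Real.rpow_natCast (φ u) 2]
    norm_num
  rw [hrw f hfnn, hrw q hqnn] at hcs
  have hX : (0:ℝ) ≤ ∫ u, f u ^ 2 ∂μ :=
    integral_nonneg fun u => sq_nonneg _
  have hY : (0:ℝ) ≤ ∫ u, q u ^ 2 ∂μ :=
    integral_nonneg fun u => sq_nonneg _
  have hsq : (∫ u, f u * q u ∂μ) ^ 2 ≤ (∫ u, f u ^ 2 ∂μ) * ∫ u, q u ^ 2 ∂μ := by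
    have h2 := pow_le_pow_left₀ (integral_nonneg fun u => mul_nonneg (hfnn u) (hqnn u)) hcs 2
    calc (∫ u, f u * q u ∂μ) ^ 2
        ≤ ((∫ u, f u ^ 2 ∂μ) ^ ((1:ℝ)/2) * (∫ u, q u ^ 2 ∂μ) ^ ((1:ℝ)/2)) ^ 2 := h2
      _ = (∫ u, f u ^ 2 ∂μ) * ∫ u, q u ^ 2 ∂μ := by
          rw [← Real.sqrt_eq_rpow, ← Real.sqrt_eq_rpow, mul_pow,
            Real.sq_sqrt hX, Real.sq_sqrt hY]
  -- put everything together
  have habs : (∫ u in s..T, g u) ^ 2 ≤ (∫ u, f u * q u ∂μ) ^ 2 := by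
    have h1 : |∫ u in s..T, g u| ≤ ∫ u in s..T, |g u| :=
      intervalIntegral.abs_integral_le_integral_abs hsT
    have h2 : (∫ u in s..T, |g u|) = ∫ u, f u * q u ∂μ := by
      rw [intervalIntegral.integral_of_le hsT]
      exact integral_congr_ae (Filter.Eventually.of_forall fun u => (hfq u).symm)
    rw [← sq_abs]
    refine pow_le_pow_left₀ (abs_nonneg _) ?_ 2
    rw [← h2] at *
    exact h1
  have hYeq : (∫ u, q u ^ 2 ∂μ) = ∫ u in s..T, Real.exp (r * A u) * (g u) ^ 2 / (α u) ^ 2 := by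
    rw [intervalIntegral.integral_of_le hsT]
    exact integral_congr_ae (Filter.Eventually.of_forall fun u => hq2 u)
  have hXle : (∫ u, f u ^ 2 ∂μ) ≤ (1 / r) * Real.exp (-(r * A s)) := by
    calc (∫ u, f u ^ 2 ∂μ) = ∫ u in Set.Ioc s T, Real.exp (-(r * A u)) * (α u) ^ 2 :=
          integral_congr_ae (Filter.Eventually.of_forall fun u => hf2 u)
      _ ≤ (1 / r) * Real.exp (-(r * A s)) := hkey
  calc (∫ u in s..T, g u) ^ 2
      ≤ (∫ u, f u * q u ∂μ) ^ 2 := habs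
    _ ≤ (∫ u, f u ^ 2 ∂μ) * ∫ u, q u ^ 2 ∂μ := hsq
    _ ≤ ((1 / r) * Real.exp (-(r * A s))) * ∫ u, q u ^ 2 ∂μ := by
        refine mul_le_mul_of_nonneg_right hXle hY
    _ = (1 / r) * Real.exp (-r * A s) *
        ∫ u in s..T, Real.exp (r * A u) * (g u) ^ 2 / (α u) ^ 2 := by
        rw [hYeq, neg_mul]
end

section
/- Let α : [0,T] → [1,∞) be measurable, 1 < p < 2, define A*(t) = ∫_0^t α(u)^{2p/(2-p)} du, and let τ > 0. Then for any measurable g : [0,T] → ℝ and any r ∈ [0,T]: (∫_r^T |g(s)|^p ds)^{2/p} ≤ ((2-p)/(2τ))^{(2-p)/p} e^{-2τ A*(r)/p} ∫_r^T e^{2τ A*(s)/p} g(s)²/α(s)² ds. -/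
open MeasureTheory intervalIntegral Set Filter


lemma key_exp_bound (c r T : ℝ) (hc : 0 < c) (hrT : r ≤ T)
    (h : ℝ → ℝ) (hm : Measurable h) (h1 : ∀ u, 1 ≤ h u)
    (hint : IntegrableOn h (Set.Icc r T))
    (A : ℝ → ℝ) (hA : ∀ t ∈ Set.Icc r T, A t = A r + ∫ u in r..t, h u) :
    ∫ s in Set.Ioc r T, Real.exp (-(c * A s)) * h s ≤ Real.exp (-(c * A r)) / c := by
  have h0 : ∀ u, 0 ≤ h u := fun u => le_trans zero_le_one (h1 u)
  set f : ℝ → ℝ := fun s => Real.exp (-(c * A s)) * h s with hf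
  -- interval integrability of h on subintervals
  have hii : ∀ a b, a ∈ Icc r T → b ∈ Icc r T → IntervalIntegrable h volume a b := by
    intro a b ha hb
    apply (hint.mono_set ?_).intervalIntegrable
    intro x hx
    rcases le_total a b with hab | hab
    · rw [uIcc_of_le hab] at hx; exact ⟨le_trans ha.1 hx.1, le_trans hx.2 hb.2⟩
    · rw [uIcc_of_ge hab] at hx; exact ⟨le_trans hb.1 hx.1, le_trans hx.2 ha.2⟩
  -- A is monotone on [r,T]
  have hAmono : MonotoneOn A (Icc r T) := by
    intro a ha b hb hab
    rw [hA a ha, hA b hb]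
    have hsplit : (∫ u in r..a, h u) + ∫ u in a..b, h u = ∫ u in r..b, h u :=
      integral_add_adjacent_intervals (hii r a (left_mem_Icc.2 hrT) ha) (hii a b ha hb)
    have hnn : 0 ≤ ∫ u in a..b, h u := integral_nonneg hab (fun x _ => h0 x)
    linarith
  -- A is continuous on [r,T]
  have hAcont : ContinuousOn A (Icc r T) := by
    have : ContinuousOn (fun t => A r + ∫ u in r..t, h u) (Icc r T) := by
      apply ContinuousOn.add continuousOn_const
      have := continuousOn_primitive_interval (f := h) (a := r) (b := T) (μ := volume)
        (by rwa [uIcc_of_le hrT])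
      rwa [uIcc_of_le hrT] at this
    exact ContinuousOn.congr this hA
  have hAge : ∀ s ∈ Icc r T, A r ≤ A s := fun s hs => hAmono (left_mem_Icc.2 hrT) hs hs.1
  -- integrability of f
  have hecont : ContinuousOn (fun s => Real.exp (-(c * A s))) (Icc r T) :=
    Real.continuous_exp.comp_continuousOn ((continuousOn_const.mul hAcont).neg)
  have hfm : AEStronglyMeasurable f (volume.restrict (Icc r T)) :=
    (hecont.aestronglyMeasurable measurableSet_Icc).mul
      (hm.aestronglyMeasurable.restrict)
  have hfbound : ∀ s ∈ Icc r T, f s ≤ Real.exp (-(c * A r)) * h s := by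
    intro s hs
    have := hAge s hs
    have : Real.exp (-(c * A s)) ≤ Real.exp (-(c * A r)) := by
      apply Real.exp_le_exp.2; nlinarith
    exact mul_le_mul_of_nonneg_right this (h0 s)
  have hfnonneg : ∀ s, 0 ≤ f s := fun s => mul_nonneg (Real.exp_pos _).le (h0 s)
  have hfi : IntegrableOn f (Icc r T) := by
    apply Integrable.mono' (hint.const_mul (Real.exp (-(c * A r))))
      hfm
    filter_upwards [ae_restrict_mem measurableSet_Icc] with s hs
    rw [Real.norm_eq_abs, abs_of_nonneg (hfnonneg s)]
    exact hfbound s hs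
  -- the piecewise bound
  have piece : ∀ a b : ℝ, a ∈ Icc r T → b ∈ Icc r T → a ≤ b →
      ∫ s in a..b, f s ≤ Real.exp (-(c * A a)) * (A b - A a) := by
    intro a b ha hb hab
    rw [integral_of_le hab]
    have hsub : Ioc a b ⊆ Icc r T := fun x hx => ⟨le_trans ha.1 hx.1.le, le_trans hx.2 hb.2⟩
    have h1' : ∫ s in Ioc a b, f s ≤ ∫ s in Ioc a b, Real.exp (-(c * A a)) * h s := by
      apply setIntegral_mono_on (hfi.mono_set hsub)
        ((hint.mono_set hsub).const_mul _) measurableSet_Ioc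
      intro s hs
      have hsmem := hsub hs
      have : Real.exp (-(c * A s)) ≤ Real.exp (-(c * A a)) := by
        apply Real.exp_le_exp.2
        have := hAmono ha hsmem hs.1.le
        nlinarith
      exact mul_le_mul_of_nonneg_right this (h0 s)
    have h2' : ∫ s in Ioc a b, Real.exp (-(c * A a)) * h s
        = Real.exp (-(c * A a)) * (A b - A a) := by
      rw [MeasureTheory.integral_const_mul]
      congr 1
      have : ∫ s in Ioc a b, h s = ∫ s in a..b, h s := (integral_of_le hab).symm
      rw [this]
      have := integral_interval_sub_left (hii r b (left_mem_Icc.2 hrT) hb)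
        (hii r a (left_mem_Icc.2 hrT) ha)
      rw [hA a ha, hA b hb]
      linarith [this]
    linarith
  -- trivial case r = T
  rcases eq_or_lt_of_le hrT with rfl | hrT'
  · simp only [Ioc_self, Measure.restrict_empty, integral_zero_measure]
    positivity
  -- now r < T
  set L := A T - A r with hL
  have hLeq : L = ∫ u in r..T, h u := by rw [hL, hA T (right_mem_Icc.2 hrT)]; ring
  have hLpos : 0 < L := by
    have : (T - r : ℝ) ≤ ∫ u in r..T, h u := by
      have h1int : IntervalIntegrable (fun _ : ℝ => (1:ℝ)) volume r T := intervalIntegrable_const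
      have := integral_mono_on hrT h1int (hii r T (left_mem_Icc.2 hrT) (right_mem_Icc.2 hrT))
        (fun x _ => h1 x)
      simpa using this
    rw [hLeq]; linarith
  set I := ∫ s in Ioc r T, f s with hI
  -- main bound for each n
  have main : ∀ n : ℕ, 0 < n →
      I ≤ Real.exp (-(c * A r)) * ((L / n) / (1 - Real.exp (-(c * (L / n))))) := by
    intro n hn
    set Δ := L / n with hΔdef
    have hnR : (0:ℝ) < n := Nat.cast_pos.2 hn
    have hΔ : 0 < Δ := div_pos hLpos hnR
    have hnΔ : (n : ℝ) * Δ = L := by rw [hΔdef]; field_simp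
    -- choose partition points
    have exu : ∀ i : ℕ, i ≤ n → ∃ t ∈ Icc r T, A t = A r + i * Δ := by
      intro i hi
      have hmem : A r + i * Δ ∈ Icc (A r) (A T) := by
        constructor
        · nlinarith [Nat.cast_nonneg (α := ℝ) i, hΔ.le]
        · have : (i:ℝ) * Δ ≤ (n:ℝ) * Δ := by
            apply mul_le_mul_of_nonneg_right _ hΔ.le
            exact_mod_cast hi
          rw [hnΔ] at this; rw [hL] at *; linarith
      have := intermediate_value_Icc hrT hAcont hmem
      obtain ⟨t, ht1, ht2⟩ := this
      exact ⟨t, ht1, ht2⟩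
    choose tt htmem htval using exu
    set u : ℕ → ℝ := fun i =>
      if i = 0 then r else if hni : n ≤ i then T
      else tt i (le_of_not_ge hni) with hu
    have hu_mem : ∀ i, u i ∈ Icc r T := by
      intro i
      simp only [hu]
      split_ifs with h1i h2i
      · exact left_mem_Icc.2 hrT
      · exact right_mem_Icc.2 hrT
      · exact htmem _ _
    have huA : ∀ i, i ≤ n → A (u i) = A r + i * Δ := by
      intro i hi
      simp only [hu]
      split_ifs with h1i h2i
      · subst h1i; simp
      · have : i = n := le_antisymm hi h2i
        subst this
        rw [hA T (right_mem_Icc.2 hrT), ← hLeq, hnΔ]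
      · exact htval _ _
    have hu0 : u 0 = r := by simp [hu]
    have hu_mono : ∀ i, u i ≤ u (i + 1) := by
      intro i
      rcases le_or_gt n i with hni | hni
      · have hi0 : i ≠ 0 := by rintro rfl; omega
        have : u i = T := by simp only [hu]; rw [if_neg hi0, dif_pos hni]
        have h2 : u (i+1) = T := by
          simp only [hu]; rw [if_neg (by omega), dif_pos (by omega)]
        rw [this, h2]
      · by_contra hcon
        push_neg at hcon
        have hle := hAmono (hu_mem (i+1)) (hu_mem i) hcon.le
        rw [huA i (by omega), huA (i+1) (by omega)] at hle
        push_cast at hle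
        nlinarith
    have hfint_sub : ∀ a b : ℝ, a ∈ Icc r T → b ∈ Icc r T →
        IntervalIntegrable f volume a b := by
      intro a b ha hb
      apply (hfi.mono_set ?_).intervalIntegrable
      intro x hx
      rcases le_total a b with hab | hab
      · rw [uIcc_of_le hab] at hx; exact ⟨le_trans ha.1 hx.1, le_trans hx.2 hb.2⟩
      · rw [uIcc_of_ge hab] at hx; exact ⟨le_trans hb.1 hx.1, le_trans hx.2 ha.2⟩
    -- split the integral
    have hsplit : ∫ s in r..T, f s =
        (∑ i ∈ Finset.range n, ∫ s in u i..u (i+1), f s) + ∫ s in u n..T, f s := by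
      have hsum := sum_integral_adjacent_intervals (μ := volume) (f := f) (a := u) (n := n)
        (fun k _ => hfint_sub _ _ (hu_mem k) (hu_mem (k+1)))
      rw [hsum, hu0]
      rw [integral_add_adjacent_intervals
        (hfint_sub _ _ (left_mem_Icc.2 hrT) (hu_mem n))
        (hfint_sub _ _ (hu_mem n) (right_mem_Icc.2 hrT))]
    -- bound each piece
    have hbound : ∀ i, i < n → ∫ s in u i..u (i+1), f s ≤
        Real.exp (-(c * A r)) * Real.exp (-(c * Δ)) ^ i * Δ := by
      intro i hi
      have := piece (u i) (u (i+1)) (hu_mem i) (hu_mem (i+1)) (hu_mono i)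
      rw [huA i (by omega), huA (i+1) (by omega)] at this
      have heq : Real.exp (-(c * (A r + i * Δ))) =
          Real.exp (-(c * A r)) * Real.exp (-(c * Δ)) ^ i := by
        rw [← Real.exp_nat_mul, ← Real.exp_add]
        ring_nf
      calc ∫ s in u i..u (i+1), f s
          ≤ Real.exp (-(c * (A r + i * Δ))) * (A r + (i+1:ℕ) * Δ - (A r + i * Δ)) := this
        _ = Real.exp (-(c * A r)) * Real.exp (-(c * Δ)) ^ i * Δ := by
            rw [heq]; push_cast; ring
    -- tail is nonpositive contribution (in fact zero)
    have htail : ∫ s in u n..T, f s ≤ 0 := by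
      have := piece (u n) T (hu_mem n) (right_mem_Icc.2 hrT) (hu_mem n).2
      rw [huA n le_rfl, hnΔ] at this
      have hAT : A T = A r + L := by rw [hL]; ring
      rw [hAT] at this
      simpa using this
    -- geometric sum bound
    set q := Real.exp (-(c * Δ)) with hq
    have hq0 : 0 < q := Real.exp_pos _
    have hq1 : q < 1 := by
      rw [hq]; apply Real.exp_lt_one_iff.2; nlinarith
    have hgeom : ∑ i ∈ Finset.range n, q ^ i ≤ 1 / (1 - q) := by
      rw [geom_sum_eq (ne_of_lt hq1) n]
      have hqn : (0:ℝ) ≤ q ^ n := pow_nonneg hq0.le n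
      have heq : (q ^ n - 1)/(q - 1) = (1 - q ^ n)/(1 - q) := by
        rw [← neg_div_neg_eq]; ring_nf
      rw [heq]
      gcongr
      · linarith
    have hIeq : I = ∫ s in r..T, f s := by rw [integral_of_le hrT]
    calc I = (∑ i ∈ Finset.range n, ∫ s in u i..u (i+1), f s) + ∫ s in u n..T, f s := by
          rw [hIeq, hsplit]
      _ ≤ (∑ i ∈ Finset.range n, Real.exp (-(c * A r)) * q ^ i * Δ) + 0 := by
          apply add_le_add _ htail
          apply Finset.sum_le_sum
          intro i hi
          exact hbound i (Finset.mem_range.1 hi)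
      _ = Real.exp (-(c * A r)) * Δ * ∑ i ∈ Finset.range n, q ^ i := by
          rw [Finset.mul_sum, add_zero]
          apply Finset.sum_congr rfl
          intro i _; ring
      _ ≤ Real.exp (-(c * A r)) * Δ * (1 / (1 - q)) := by
          apply mul_le_mul_of_nonneg_left hgeom
          positivity
      _ = Real.exp (-(c * A r)) * (Δ / (1 - q)) := by ring
  -- limit argument
  have hslope : Filter.Tendsto (fun x : ℝ => x / (1 - Real.exp (-(c * x))))
      (nhdsWithin 0 {x | x ≠ 0}) (nhds c⁻¹) := by
    have hd : HasDerivAt (fun x : ℝ => 1 - Real.exp (-(c * x))) c 0 := by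
      have h1 : HasDerivAt (fun x : ℝ => -(c * x)) (-c) 0 := by
        convert ((hasDerivAt_id (0:ℝ)).const_mul c).neg using 1 <;> first | rfl | ring
      have h2 := (Real.hasDerivAt_exp (-(c * 0))).comp 0 h1
      have h3 := (hasDerivAt_const (0:ℝ) (1:ℝ)).sub h2
      exact h3.congr_deriv (by simp)
    rw [hasDerivAt_iff_tendsto_slope] at hd
    have hinv := hd.inv₀ (ne_of_gt hc)
    apply hinv.congr'
    filter_upwards [self_mem_nhdsWithin] with x hx
    have hse : slope (fun x : ℝ => 1 - Real.exp (-(c*x))) 0 x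
        = (1 - Real.exp (-(c*x)))/x := by
      rw [slope_def_field]
      simp
    rw [hse, inv_div]
  have hxseq : Filter.Tendsto (fun n : ℕ => L / (n:ℝ)) Filter.atTop
      (nhdsWithin 0 {x | x ≠ 0}) := by
    rw [tendsto_nhdsWithin_iff]
    constructor
    · exact tendsto_const_div_atTop_nhds_zero_nat L
    · filter_upwards [Filter.eventually_ge_atTop 1] with n hn
      have h0n : (0:ℝ) < n := by exact_mod_cast hn
      show L / (n:ℝ) ≠ 0
      positivity
  have htend : Filter.Tendsto
      (fun n : ℕ => Real.exp (-(c * A r)) * ((L / n) / (1 - Real.exp (-(c * (L / n))))))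
      Filter.atTop (nhds (Real.exp (-(c * A r)) / c)) := by
    have := (hslope.comp hxseq).const_mul (Real.exp (-(c * A r)))
    simpa [div_eq_mul_inv] using this
  apply ge_of_tendsto htend
  filter_upwards [Filter.eventually_ge_atTop 1] with n hn
  exact main n hn


theorem stmt5 (T p τ : ℝ) (hT : 0 ≤ T) (hp1 : 1 < p) (hp2 : p < 2) (hτ : 0 < τ)
    (α g : ℝ → ℝ) (hα : Measurable α) (hα1 : ∀ u, 1 ≤ α u)
    (hαi : IntegrableOn (fun u => α u ^ (2 * p / (2 - p))) (Set.Icc 0 T))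
    (Astar : ℝ → ℝ) (hAstar : ∀ t, Astar t = ∫ u in (0:ℝ)..t, α u ^ (2 * p / (2 - p)))
    (hg : Measurable g)
    (hgp : IntegrableOn (fun s => |g s| ^ p) (Set.Icc 0 T))
    (hgi : IntegrableOn
      (fun s => Real.exp (2 * τ * Astar s / p) * (g s) ^ 2 / (α s) ^ 2) (Set.Icc 0 T))
    (r : ℝ) (hr : r ∈ Set.Icc 0 T) :
    (∫ s in r..T, |g s| ^ p) ^ (2 / p) ≤
      ((2 - p) / (2 * τ)) ^ ((2 - p) / p) * Real.exp (-(2 * τ * Astar r / p)) *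
        ∫ s in r..T, Real.exp (2 * τ * Astar s / p) * (g s) ^ 2 / (α s) ^ 2 := by
  have hp0 : (0:ℝ) < p := lt_trans zero_lt_one hp1
  have h2p : (0:ℝ) < 2 - p := by linarith
  have hrT : r ≤ T := hr.2
  have hr0 : 0 ≤ r := hr.1
  set c := 2 * τ / (2 - p) with hc_def
  have hc : 0 < c := by positivity
  set h : ℝ → ℝ := fun u => α u ^ (2 * p / (2 - p)) with hh
  have hα0 : ∀ u, 0 < α u := fun u => lt_of_lt_of_le zero_lt_one (hα1 u)
  have hmh : Measurable h := (Real.continuous_rpow_const (by positivity)).measurable.comp hα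
  have h1 : ∀ u, 1 ≤ h u := fun u => Real.one_le_rpow (hα1 u) (by positivity)
  have h0 : ∀ u, 0 ≤ h u := fun u => le_trans zero_le_one (h1 u)
  have hIccsub : Set.Icc r T ⊆ Set.Icc 0 T := Set.Icc_subset_Icc hr0 le_rfl
  have hIocsub : Set.Ioc r T ⊆ Set.Icc 0 T := fun x hx => ⟨le_trans hr0 hx.1.le, hx.2⟩
  have hii : ∀ a b, a ∈ Icc 0 T → b ∈ Icc 0 T → IntervalIntegrable h volume a b := by
    intro a b ha hb
    apply (hαi.mono_set ?_).intervalIntegrable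
    intro x hx
    rcases le_total a b with hab | hab
    · rw [uIcc_of_le hab] at hx; exact ⟨le_trans ha.1 hx.1, le_trans hx.2 hb.2⟩
    · rw [uIcc_of_ge hab] at hx; exact ⟨le_trans hb.1 hx.1, le_trans hx.2 ha.2⟩
  have hA' : ∀ t ∈ Set.Icc r T, Astar t = Astar r + ∫ u in r..t, h u := by
    intro t ht
    rw [hAstar t, hAstar r]
    have := integral_add_adjacent_intervals (a := (0:ℝ)) (b := r) (c := t) (f := h)
      (μ := volume) (hii 0 r (left_mem_Icc.2 hT) hr) (hii r t hr (hIccsub ht))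
    linarith
  -- key bound
  have key := key_exp_bound c r T hc hrT h hmh h1 (hαi.mono_set hIccsub) Astar hA'
  -- Astar is nonneg and continuous on [0,T]
  have hAcont : ContinuousOn Astar (Icc 0 T) := by
    have : ContinuousOn (fun t => ∫ u in (0:ℝ)..t, h u) (Icc 0 T) := by
      have := continuousOn_primitive_interval (f := h) (a := (0:ℝ)) (b := T) (μ := volume)
        (by rwa [uIcc_of_le hT])
      rwa [uIcc_of_le hT] at this
    exact ContinuousOn.congr this (fun t _ => hAstar t)
  have hAnonneg : ∀ s ∈ Icc 0 T, 0 ≤ Astar s := by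
    intro s hs
    rw [hAstar s]
    exact integral_nonneg hs.1 (fun x _ => h0 x)
  -- Hölder setup
  set μ := volume.restrict (Set.Ioc r T) with hμ
  set P := 2 / (2 - p) with hP
  set Q := 2 / p with hQ
  have hconj : Real.HolderConjugate P Q := by
    rw [Real.holderConjugate_iff]; constructor
    · rw [hP]; rw [lt_div_iff₀ h2p]; linarith
    · rw [hP, hQ]; field_simp; ring
  set f₁ : ℝ → ℝ := fun s => Real.exp (-(τ * Astar s)) * α s ^ p with hf₁
  set f₂ : ℝ → ℝ := fun s => Real.exp (τ * Astar s) * |g s| ^ p / α s ^ p with hf₂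
  have hf₁nonneg : ∀ s, 0 ≤ f₁ s := by
    intro s; apply mul_nonneg (Real.exp_pos _).le (Real.rpow_nonneg (hα0 s).le _)
  have hf₂nonneg : ∀ s, 0 ≤ f₂ s := by
    intro s
    apply div_nonneg _ (Real.rpow_nonneg (hα0 s).le _)
    exact mul_nonneg (Real.exp_pos _).le (Real.rpow_nonneg (abs_nonneg _) _)
  have hmul : ∀ s, f₁ s * f₂ s = |g s| ^ p := by
    intro s
    have hαp : (0:ℝ) < α s ^ p := Real.rpow_pos_of_pos (hα0 s) p
    have he : Real.exp (-(τ * Astar s)) * Real.exp (τ * Astar s) = 1 := by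
      rw [← Real.exp_add]; simp
    calc f₁ s * f₂ s
        = (Real.exp (-(τ * Astar s)) * Real.exp (τ * Astar s)) *
          (α s ^ p / α s ^ p) * |g s| ^ p := by rw [hf₁, hf₂]; ring
      _ = |g s| ^ p := by rw [he, div_self (ne_of_gt hαp)]; ring
  have hf₁pow : ∀ s, f₁ s ^ P = Real.exp (-(c * Astar s)) * h s := by
    intro s
    rw [hf₁, Real.mul_rpow (Real.exp_pos _).le (Real.rpow_nonneg (hα0 s).le _),
      ← Real.exp_mul, ← Real.rpow_mul (hα0 s).le]
    congr 1
    · congr 1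
      rw [hc_def, hP]; ring
    · rw [hh]
      congr 1
      rw [hP]
      field_simp
  have hf₂pow : ∀ s, f₂ s ^ Q = Real.exp (2 * τ * Astar s / p) * g s ^ 2 / α s ^ 2 := by
    intro s
    have hpQ : p * Q = 2 := by rw [hQ]; field_simp
    rw [hf₂, Real.div_rpow (mul_nonneg (Real.exp_pos _).le
        (Real.rpow_nonneg (abs_nonneg _) _)) (Real.rpow_nonneg (hα0 s).le _),
      Real.mul_rpow (Real.exp_pos _).le (Real.rpow_nonneg (abs_nonneg _) _),
      ← Real.exp_mul, ← Real.rpow_mul (abs_nonneg _), ← Real.rpow_mul (hα0 s).le,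
      hpQ, Real.rpow_two, Real.rpow_two, sq_abs]
    congr 2
    rw [hQ]; ring
  -- measurability
  have hμle : μ ≤ volume.restrict (Icc 0 T) := Measure.restrict_mono hIocsub le_rfl
  have hαpm : Measurable (fun s => α s ^ p) :=
    (Real.continuous_rpow_const hp0.le).measurable.comp hα
  have hgpm : Measurable (fun s => |g s| ^ p) :=
    (Real.continuous_rpow_const hp0.le).measurable.comp hg.abs
  have hf₁m : AEStronglyMeasurable f₁ μ := by
    apply AEStronglyMeasurable.mono_measure _ hμle
    exact ((Real.continuous_exp.comp_continuousOn
        ((continuousOn_const.mul hAcont).neg)).aestronglyMeasurable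
        measurableSet_Icc).mul hαpm.aestronglyMeasurable
  have hf₂m : AEStronglyMeasurable f₂ μ := by
    apply AEStronglyMeasurable.mono_measure _ hμle
    have hbase : AEStronglyMeasurable
        (fun s => Real.exp (τ * Astar s) * |g s| ^ p * (α s ^ p)⁻¹)
        (volume.restrict (Icc 0 T)) :=
      (((Real.continuous_exp.comp_continuousOn
        (continuousOn_const.mul hAcont)).aestronglyMeasurable
        measurableSet_Icc).mul hgpm.aestronglyMeasurable).mul
        hαpm.inv.aestronglyMeasurable
    apply hbase.congr
    filter_upwards with s
    show _ = f₂ s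
    rw [hf₂]
    simp only [div_eq_mul_inv]
  -- integrability of the powers
  have hInt1 : IntegrableOn (fun s => Real.exp (-(c * Astar s)) * h s) (Set.Ioc r T) := by
    apply Integrable.mono' (hαi.mono_set hIocsub)
    · apply AEStronglyMeasurable.mono_measure _ hμle
      exact ((Real.continuous_exp.comp_continuousOn
          ((continuousOn_const.mul hAcont).neg)).aestronglyMeasurable
          measurableSet_Icc).mul hmh.aestronglyMeasurable
    · filter_upwards [ae_restrict_mem measurableSet_Ioc] with s hs
      rw [Real.norm_eq_abs, abs_of_nonneg (mul_nonneg (Real.exp_pos _).le (h0 s))]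
      have hA0 : 0 ≤ Astar s := hAnonneg s (hIocsub hs)
      have : Real.exp (-(c * Astar s)) ≤ 1 := by
        apply Real.exp_le_one_iff.2
        nlinarith
      nlinarith [h0 s]
  have hInt2 : IntegrableOn
      (fun s => Real.exp (2 * τ * Astar s / p) * g s ^ 2 / α s ^ 2) (Set.Ioc r T) :=
    hgi.mono_set hIocsub
  have hP0' : (0:ℝ) < P := by rw [hP]; positivity
  have hQ0' : (0:ℝ) < Q := by rw [hQ]; positivity
  have hPne : ENNReal.ofReal P ≠ 0 := by
    simp only [ne_eq, ENNReal.ofReal_eq_zero, not_le]; exact hP0'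
  have hQne : ENNReal.ofReal Q ≠ 0 := by
    simp only [ne_eq, ENNReal.ofReal_eq_zero, not_le]; exact hQ0'
  have hf₁mem : MemLp f₁ (ENNReal.ofReal P) μ := by
    apply (memLp_norm_rpow_iff hf₁m hPne ENNReal.ofReal_ne_top).1
    rw [ENNReal.div_self hPne ENNReal.ofReal_ne_top, memLp_one_iff_integrable]
    apply hInt1.congr
    filter_upwards with s
    rw [ENNReal.toReal_ofReal hP0'.le, Real.norm_eq_abs, abs_of_nonneg (hf₁nonneg s), hf₁pow s]
  have hf₂mem : MemLp f₂ (ENNReal.ofReal Q) μ := by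
    apply (memLp_norm_rpow_iff hf₂m hQne ENNReal.ofReal_ne_top).1
    rw [ENNReal.div_self hQne ENNReal.ofReal_ne_top, memLp_one_iff_integrable]
    apply hInt2.congr
    filter_upwards with s
    rw [ENNReal.toReal_ofReal hQ0'.le, Real.norm_eq_abs, abs_of_nonneg (hf₂nonneg s), hf₂pow s]
  have holder := integral_mul_le_Lp_mul_Lq_of_nonneg hconj
    (Eventually.of_forall hf₁nonneg) (Eventually.of_forall hf₂nonneg) hf₁mem hf₂mem
  have hBint : (∫ a, f₁ a * f₂ a ∂μ) = ∫ s in Set.Ioc r T, |g s| ^ p :=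
    integral_congr_ae (Eventually.of_forall hmul)
  have hJeq : (∫ a, f₁ a ^ P ∂μ) = ∫ s in Set.Ioc r T, Real.exp (-(c * Astar s)) * h s :=
    integral_congr_ae (Eventually.of_forall hf₁pow)
  have hKeq : (∫ a, f₂ a ^ Q ∂μ)
      = ∫ s in Set.Ioc r T, Real.exp (2 * τ * Astar s / p) * g s ^ 2 / α s ^ 2 :=
    integral_congr_ae (Eventually.of_forall hf₂pow)
  rw [hBint, hJeq, hKeq] at holder
  set J := ∫ s in Set.Ioc r T, Real.exp (-(c * Astar s)) * h s with hJdef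
  set K := ∫ s in Set.Ioc r T, Real.exp (2 * τ * Astar s / p) * g s ^ 2 / α s ^ 2 with hKdef
  set B := ∫ s in Set.Ioc r T, |g s| ^ p with hBdef
  have hJnn : 0 ≤ J := setIntegral_nonneg measurableSet_Ioc
    (fun s _ => mul_nonneg (Real.exp_pos _).le (h0 s))
  have hKnn : 0 ≤ K := setIntegral_nonneg measurableSet_Ioc
    (fun s _ => by positivity)
  have hBnn : 0 ≤ B := setIntegral_nonneg measurableSet_Ioc
    (fun s _ => Real.rpow_nonneg (abs_nonneg _) _)
  have step := Real.rpow_le_rpow hBnn holder hQ0'.le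
  have hRHSeq : (J ^ (1/P) * K ^ (1/Q)) ^ Q = J ^ ((2-p)/p) * K := by
    rw [Real.mul_rpow (Real.rpow_nonneg hJnn _) (Real.rpow_nonneg hKnn _),
      ← Real.rpow_mul hJnn, ← Real.rpow_mul hKnn]
    have e1 : 1/P * Q = (2-p)/p := by rw [hP, hQ]; field_simp
    have e2 : 1/Q * Q = 1 := by rw [hQ]; field_simp
    rw [e1, e2, Real.rpow_one]
  have hJle : J ≤ (2 - p) / (2 * τ) * Real.exp (-(c * Astar r)) := by
    have : Real.exp (-(c * Astar r)) / c = (2 - p) / (2 * τ) * Real.exp (-(c * Astar r)) := by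
      rw [hc_def]; field_simp
    rw [← this]; exact key
  have hJpow : J ^ ((2-p)/p) ≤
      ((2 - p) / (2 * τ)) ^ ((2-p)/p) * Real.exp (-(2 * τ * Astar r / p)) := by
    calc J ^ ((2-p)/p)
        ≤ ((2 - p) / (2 * τ) * Real.exp (-(c * Astar r))) ^ ((2-p)/p) :=
          Real.rpow_le_rpow hJnn hJle (by positivity)
      _ = ((2 - p) / (2 * τ)) ^ ((2-p)/p) * Real.exp (-(2 * τ * Astar r / p)) := by
          rw [Real.mul_rpow (by positivity) (Real.exp_pos _).le, ← Real.exp_mul]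
          congr 2
          rw [hc_def]; field_simp
  have final : B ^ Q ≤
      ((2 - p) / (2 * τ)) ^ ((2-p)/p) * Real.exp (-(2 * τ * Astar r / p)) * K := by
    calc B ^ Q ≤ (J ^ (1/P) * K ^ (1/Q)) ^ Q := step
      _ = J ^ ((2-p)/p) * K := hRHSeq
      _ ≤ _ := mul_le_mul_of_nonneg_right hJpow hKnn
  rw [intervalIntegral.integral_of_le hrT, intervalIntegral.integral_of_le hrT]
  exact final
end

section
/- Let α : [0,T] → [√δ, ∞) be continuous for some δ > 0, A(t) = ∫_0^t α(u)² du, β > 0, and let g : {(t,s) : 0 ≤ t ≤ s ≤ T} → ℝ be measurable with ∫_0^T ∫_t^T e^{βA(s)} g(t,s)²/α(s)² ds dt < ∞. Then ∫_0^T ∫_t^T e^{βA(s)} (∫_s^T g(t,u) du)² β α(s)² ds dt ≤ (4/β) ∫_0^T ∫_t^T e^{βA(s)} g(t,s)²/α(s)² ds dt. -/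
open MeasureTheory
open scoped ENNReal NNReal

lemma cs_sq_integral {μ : Measure ℝ} (f g : ℝ → ℝ)
    (hf : MemLp f 2 μ) (hg : MemLp g 2 μ) :
    (∫ a, f a * g a ∂μ) ^ 2 ≤ (∫ a, f a ^ 2 ∂μ) * (∫ a, g a ^ 2 ∂μ) := by
  have hpq : Real.HolderConjugate 2 2 := Real.HolderConjugate.two_two
  have h2 : (ENNReal.ofReal (2:ℝ)) = 2 := by
    norm_num
  have h := MeasureTheory.integral_mul_norm_le_Lp_mul_Lq (μ := μ) hpq (h2 ▸ hf) (h2 ▸ hg)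
  have hf2 : Integrable (fun a => f a ^ 2) μ := (memLp_two_iff_integrable_sq hf.1).1 hf
  have hg2 : Integrable (fun a => g a ^ 2) μ := (memLp_two_iff_integrable_sq hg.1).1 hg
  have hfg : Integrable (fun a => f a * g a) μ := by
    refine Integrable.mono' (((hf2.add hg2)).div_const 2) (hf.1.mul hg.1) ?_
    filter_upwards with a
    simp only [Pi.add_apply, Real.norm_eq_abs, abs_mul]
    nlinarith [abs_nonneg (f a), abs_nonneg (g a), sq_abs (f a), sq_abs (g a),
      sq_nonneg (|f a| - |g a|)]
  have habs : |∫ a, f a * g a ∂μ| ≤ ∫ a, ‖f a‖ * ‖g a‖ ∂μ := by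
    calc |∫ a, f a * g a ∂μ| ≤ ∫ a, ‖f a * g a‖ ∂μ := by
          rw [← Real.norm_eq_abs]; exact norm_integral_le_integral_norm _
      _ = ∫ a, ‖f a‖ * ‖g a‖ ∂μ := by
          simp_rw [norm_mul]
  have hfn : (∫ a, ‖f a‖ ^ (2:ℝ) ∂μ) = ∫ a, f a ^ 2 ∂μ := by
    refine integral_congr_ae (.of_forall fun a => ?_)
    simp [Real.rpow_two, Real.norm_eq_abs, sq_abs]
  have hgn : (∫ a, ‖g a‖ ^ (2:ℝ) ∂μ) = ∫ a, g a ^ 2 ∂μ := by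
    refine integral_congr_ae (.of_forall fun a => ?_)
    simp [Real.rpow_two, Real.norm_eq_abs, sq_abs]
  rw [hfn, hgn] at h
  have hI2 : 0 ≤ ∫ a, f a ^ 2 ∂μ := integral_nonneg fun a => sq_nonneg _
  have hJ2 : 0 ≤ ∫ a, g a ^ 2 ∂μ := integral_nonneg fun a => sq_nonneg _
  have key : |∫ a, f a * g a ∂μ| ≤
      (∫ a, f a ^ 2 ∂μ) ^ ((1:ℝ)/2) * (∫ a, g a ^ 2 ∂μ) ^ ((1:ℝ)/2) := habs.trans h
  have h1 : (∫ a, f a * g a ∂μ) ^ 2 ≤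
      ((∫ a, f a ^ 2 ∂μ) ^ ((1:ℝ)/2) * (∫ a, g a ^ 2 ∂μ) ^ ((1:ℝ)/2)) ^ 2 := by
    rw [← sq_abs]
    exact pow_le_pow_left₀ (abs_nonneg _) key 2
  refine h1.trans_eq ?_
  rw [mul_pow, ← Real.rpow_natCast ((∫ a, f a ^ 2 ∂μ) ^ ((1:ℝ)/2)) 2,
    ← Real.rpow_natCast ((∫ a, g a ^ 2 ∂μ) ^ ((1:ℝ)/2)) 2,
    ← Real.rpow_mul hI2, ← Real.rpow_mul hJ2]
  norm_num

lemma expA_integral (α A : ℝ → ℝ) (hαc : Continuous α)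
    (hA' : ∀ s, HasDerivAt A (α s ^ 2) s) (c : ℝ) (hc : c ≠ 0) (a b : ℝ) :
    ∫ s in a..b, Real.exp (c * A s) * α s ^ 2
      = (1 / c) * (Real.exp (c * A b) - Real.exp (c * A a)) := by
  have hAc : Continuous A := by
    rw [continuous_iff_continuousAt]; exact fun s => (hA' s).continuousAt
  have hF : ∀ s, HasDerivAt (fun u => (1 / c) * Real.exp (c * A u))
      (Real.exp (c * A s) * α s ^ 2) s := by
    intro s
    have h1 : HasDerivAt (fun u => c * A u) (c * α s ^ 2) s := (hA' s).const_mul c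
    have h2 := (h1.exp).const_mul (1 / c)
    refine h2.congr_deriv ?_
    field_simp
  have hint : IntervalIntegrable (fun s => Real.exp (c * A s) * α s ^ 2) volume a b :=
    ((Real.continuous_exp.comp (continuous_const.mul hAc)).mul (hαc.pow 2)).intervalIntegrable a b
  rw [intervalIntegral.integral_eq_sub_of_hasDerivAt (fun x _ => hF x) hint]
  ring

lemma inner_bound (T β : ℝ) (hβ : 0 < β) (α : ℝ → ℝ) (hαc : Continuous α)
    (hα0 : ∀ s, 0 < α s) (A : ℝ → ℝ) (hA' : ∀ s, HasDerivAt A (α s ^ 2) s)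
    (hA0 : ∀ s, 0 ≤ s → 0 ≤ A s)
    (f : ℝ → ℝ) (hfm : Measurable f) (t : ℝ) (ht0 : 0 ≤ t) (htT : t ≤ T)
    (h1 : IntegrableOn (fun s => Real.exp (β * A s) * f s ^ 2 / α s ^ 2) (Set.Ioc t T))
    (hL : IntegrableOn
      (fun s => Real.exp (β * A s) * (∫ u in s..T, f u) ^ 2 * (β * α s ^ 2)) (Set.Ioc t T)) :
    ∫ s in t..T, Real.exp (β * A s) * (∫ u in s..T, f u) ^ 2 * (β * α s ^ 2)
      ≤ (4 / β) * ∫ s in t..T, Real.exp (β * A s) * f s ^ 2 / α s ^ 2 := by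
  have hAc : Continuous A := by
    rw [continuous_iff_continuousAt]; exact fun s => (hA' s).continuousAt
  have exp_sq : ∀ x : ℝ, Real.exp x ^ 2 = Real.exp (2 * x) := fun x => by
    rw [← Real.exp_nat_mul]; norm_num
  set q2 : ℝ → ℝ := fun u => Real.exp (β / 2 * A u) * f u ^ 2 / α u ^ 2 with hq2def
  have hq2nn : ∀ u, 0 ≤ q2 u := fun u =>
    div_nonneg (mul_nonneg (Real.exp_pos _).le (sq_nonneg _)) (sq_nonneg _)
  have hq2m : Measurable q2 :=
    (((Real.continuous_exp.comp (continuous_const.mul hAc)).measurable).mul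
      (hfm.pow_const 2)).div ((hαc.pow 2).measurable)
  have hq2int : IntegrableOn q2 (Set.Ioc t T) := by
    refine Integrable.mono' h1 hq2m.aestronglyMeasurable ?_
    rw [ae_restrict_iff' measurableSet_Ioc]
    refine .of_forall fun u hu => ?_
    rw [Real.norm_eq_abs, abs_of_nonneg (hq2nn u)]
    have hAu : 0 ≤ A u := hA0 u (ht0.trans hu.1.le)
    have hee : Real.exp (β / 2 * A u) ≤ Real.exp (β * A u) := by
      apply Real.exp_le_exp.2; nlinarith
    show Real.exp (β / 2 * A u) * f u ^ 2 / α u ^ 2 ≤ Real.exp (β * A u) * f u ^ 2 / α u ^ 2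
    gcongr
  set Wf : ℝ → ℝ := fun s => ∫ u in Set.Ioc s T, q2 u with hWdef
  have hWnn : ∀ s, 0 ≤ Wf s := fun s => setIntegral_nonneg measurableSet_Ioc fun u _ => hq2nn u
  -- Cauchy–Schwarz step
  have hcs : ∀ s ∈ Set.Icc t T,
      (∫ u in s..T, f u) ^ 2 ≤ 2 / β * Real.exp (-(β / 2) * A s) * Wf s := by
    intro s hs
    obtain ⟨hts, hsT⟩ := hs
    set μs := volume.restrict (Set.Ioc s T) with hμs
    set p : ℝ → ℝ := fun u => Real.exp (-(β / 4) * A u) * α u with hpdef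
    set q : ℝ → ℝ := fun u => Real.exp (β / 4 * A u) * f u / α u with hqdef
    have hpc : Continuous p :=
      (Real.continuous_exp.comp (continuous_const.mul hAc)).mul hαc
    have hqm : Measurable q :=
      (((Real.continuous_exp.comp (continuous_const.mul hAc)).measurable).mul hfm).div
        hαc.measurable
    have hpq : ∀ u, p u * q u = f u := by
      intro u
      have hα := (hα0 u).ne'
      show Real.exp (-(β / 4) * A u) * α u * (Real.exp (β / 4 * A u) * f u / α u) = f u
      field_simp
      have e1 : Real.exp (-(β * A u) / 4) * Real.exp (β * A u / 4) = 1 := by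
        rw [← Real.exp_add]; ring_nf; exact Real.exp_zero
      rw [neg_div] at e1
      linear_combination f u * e1
    have hp2 : ∀ u, p u ^ 2 = Real.exp (-(β / 2) * A u) * α u ^ 2 := by
      intro u
      show (Real.exp (-(β / 4) * A u) * α u) ^ 2 = _
      rw [mul_pow, exp_sq]
      ring_nf
    have hq2eq : ∀ u, q u ^ 2 = q2 u := by
      intro u
      show (Real.exp (β / 4 * A u) * f u / α u) ^ 2 = Real.exp (β / 2 * A u) * f u ^ 2 / α u ^ 2
      rw [div_pow, mul_pow, exp_sq]
      ring_nf
    have hpm : MemLp p 2 μs := by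
      refine (memLp_two_iff_integrable_sq hpc.aestronglyMeasurable).2 ?_
      exact (hpc.pow 2).integrableOn_Ioc
    have hqmem : MemLp q 2 μs := by
      refine (memLp_two_iff_integrable_sq hqm.aestronglyMeasurable).2 ?_
      have h' : IntegrableOn q2 (Set.Ioc s T) := hq2int.mono_set (Set.Ioc_subset_Ioc_left hts)
      exact h'.congr_fun (fun u _ => (hq2eq u).symm) measurableSet_Ioc
    have key := cs_sq_integral p q hpm hqmem
    have e1 : (∫ a, p a * q a ∂μs) = ∫ u in s..T, f u := by
      rw [intervalIntegral.integral_of_le hsT]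
      exact integral_congr_ae (.of_forall fun u => hpq u)
    have e2 : (∫ a, p a ^ 2 ∂μs)
        = 2 / β * (Real.exp (-(β / 2) * A s) - Real.exp (-(β / 2) * A T)) := by
      have e2a : (∫ a, p a ^ 2 ∂μs) = ∫ u in s..T, Real.exp (-(β / 2) * A u) * α u ^ 2 := by
        rw [intervalIntegral.integral_of_le hsT]
        exact integral_congr_ae (.of_forall fun u => hp2 u)
      rw [e2a, expA_integral α A hαc hA' (-(β / 2)) (neg_ne_zero.2 (by positivity)) s T]
      have hh : (1 : ℝ) / (-(β / 2)) = -(2 / β) := by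
        field_simp
      rw [hh]; ring
    have e3 : (∫ a, q a ^ 2 ∂μs) = Wf s := integral_congr_ae (.of_forall fun u => hq2eq u)
    rw [e1, e2, e3] at key
    refine key.trans ?_
    have hexpT : 0 < Real.exp (-(β / 2) * A T) := Real.exp_pos _
    have : 2 / β * (Real.exp (-(β / 2) * A s) - Real.exp (-(β / 2) * A T))
        ≤ 2 / β * Real.exp (-(β / 2) * A s) := by
      have h2β : 0 < 2 / β := by positivity
      nlinarith
    exact mul_le_mul_of_nonneg_right this (hWnn s)
  -- main chain
  set L : ℝ → ℝ := fun s => Real.exp (β * A s) * (∫ u in s..T, f u) ^ 2 * (β * α s ^ 2)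
    with hLdef
  set R : ℝ → ℝ := fun s => Real.exp (β * A s) * f s ^ 2 / α s ^ 2 with hRdef
  have hLnn : ∀ s, 0 ≤ L s := fun s => by
    have := Real.exp_pos (β * A s)
    positivity
  have hRnn : ∀ s, 0 ≤ R s := fun s =>
    div_nonneg (mul_nonneg (Real.exp_pos _).le (sq_nonneg _)) (sq_nonneg _)
  set h : ℝ → ℝ≥0∞ := fun u => ENNReal.ofReal (q2 u) with hhdef
  set k : ℝ → ℝ≥0∞ := fun s => ENNReal.ofReal (2 * Real.exp (β / 2 * A s) * α s ^ 2)
    with hkdef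
  have hhm : Measurable h := ENNReal.measurable_ofReal.comp hq2m
  have hkm : Measurable k := ENNReal.measurable_ofReal.comp
    ((continuous_const.mul (Real.continuous_exp.comp (continuous_const.mul hAc))).mul
      (hαc.pow 2)).measurable
  have hW : ∀ s ∈ Set.Icc t T, ENNReal.ofReal (Wf s) = ∫⁻ u in Set.Ioc s T, h u := by
    intro s hs
    exact ofReal_integral_eq_lintegral_ofReal
      (hq2int.mono_set (Set.Ioc_subset_Ioc_left hs.1))
      ((ae_restrict_iff' measurableSet_Ioc).2 (.of_forall fun u _ => hq2nn u))
  have hant : Measurable fun s => ∫⁻ u in Set.Ioc s T, h u := by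
    have : Antitone fun s => ∫⁻ u in Set.Ioc s T, h u := fun a b hab =>
      lintegral_mono_set (Set.Ioc_subset_Ioc_left hab)
    exact this.measurable
  rw [intervalIntegral.integral_of_le htT, intervalIntegral.integral_of_le htT]
  have step1 : ∫ s in Set.Ioc t T, L s = (∫⁻ s in Set.Ioc t T, ENNReal.ofReal (L s)).toReal := by
    rw [integral_eq_lintegral_of_nonneg_ae (.of_forall fun s => hLnn s) hL.aestronglyMeasurable]
  have step2 : ∫⁻ s in Set.Ioc t T, ENNReal.ofReal (L s)
      ≤ ∫⁻ s in Set.Ioc t T, k s * ∫⁻ u in Set.Ioc s T, h u := by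
    refine setLIntegral_mono (hkm.mul hant) (fun s hs => ?_)
    have hs' : s ∈ Set.Icc t T := Set.mem_Icc.2 ⟨hs.1.le, hs.2⟩
    have hb : L s ≤ 2 * Real.exp (β / 2 * A s) * α s ^ 2 * Wf s := by
      have h2 := hcs s hs'
      have hmul := mul_le_mul_of_nonneg_left h2
        (mul_nonneg (Real.exp_pos (β * A s)).le (by positivity : (0:ℝ) ≤ β * α s ^ 2))
      calc L s = Real.exp (β * A s) * (β * α s ^ 2) * (∫ u in s..T, f u) ^ 2 := by
            simp only [hLdef]; ring
        _ ≤ Real.exp (β * A s) * (β * α s ^ 2) * (2 / β * Real.exp (-(β / 2) * A s) * Wf s) :=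
            hmul
        _ = 2 * (Real.exp (β * A s) * Real.exp (-(β / 2) * A s)) * α s ^ 2 * Wf s * (β / β) := by
            ring
        _ = 2 * Real.exp (β / 2 * A s) * α s ^ 2 * Wf s := by
            rw [← Real.exp_add, div_self (ne_of_gt hβ), mul_one]
            ring_nf
    calc ENNReal.ofReal (L s) ≤ ENNReal.ofReal (2 * Real.exp (β / 2 * A s) * α s ^ 2 * Wf s) :=
          ENNReal.ofReal_le_ofReal hb
      _ = k s * ENNReal.ofReal (Wf s) := by
          rw [ENNReal.ofReal_mul (by positivity)]
      _ = k s * ∫⁻ u in Set.Ioc s T, h u := by rw [hW s hs']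
  -- Tonelli
  have hmeas_lt : MeasurableSet {z : ℝ × ℝ | z.1 < z.2} :=
    measurableSet_lt measurable_fst measurable_snd
  set Φ : ℝ × ℝ → ℝ≥0∞ :=
    fun z => Set.indicator {z : ℝ × ℝ | z.1 < z.2} (fun z => k z.1 * h z.2) z with hΦdef
  have hΦm : Measurable Φ :=
    (Measurable.mul (hkm.comp measurable_fst) (hhm.comp measurable_snd)).indicator hmeas_lt
  have hind1 : ∀ s u : ℝ, Φ (s, u) = (Set.Ioi s).indicator (fun u => k s * h u) u := by
    intro s u
    by_cases hsu : s < u <;>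
      simp [hΦdef, Set.indicator_apply, Set.mem_Ioi, Set.mem_setOf_eq, hsu]
  have hind2 : ∀ s u : ℝ, Φ (s, u) = (Set.Iio u).indicator (fun s => k s * h u) s := by
    intro s u
    by_cases hsu : s < u <;>
      simp [hΦdef, Set.indicator_apply, Set.mem_Iio, Set.mem_setOf_eq, hsu]
  have lhs_eq : ∀ s ∈ Set.Ioc t T,
      (∫⁻ u in Set.Ioc t T, Φ (s, u)) = k s * ∫⁻ u in Set.Ioc s T, h u := by
    intro s hs
    have : (∫⁻ u in Set.Ioc t T, Φ (s, u))
        = ∫⁻ u in Set.Ioc t T, (Set.Ioi s).indicator (fun u => k s * h u) u :=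
      lintegral_congr fun u => hind1 s u
    rw [this, lintegral_indicator measurableSet_Ioi _,
      Measure.restrict_restrict measurableSet_Ioi]
    have hseq : Set.Ioi s ∩ Set.Ioc t T = Set.Ioc s T := by
      ext u
      simp only [Set.mem_inter_iff, Set.mem_Ioi, Set.mem_Ioc]
      constructor
      · rintro ⟨h1, h2, h3⟩; exact ⟨h1, h3⟩
      · rintro ⟨h1, h2⟩; exact ⟨h1, hs.1.trans h1, h2⟩
    rw [hseq, lintegral_const_mul' _ _ ENNReal.ofReal_ne_top]
  have rhs_eq : ∀ u ∈ Set.Ioc t T,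
      (∫⁻ s in Set.Ioc t T, Φ (s, u)) = (∫⁻ s in Set.Ioc t u, k s) * h u := by
    intro u hu
    have : (∫⁻ s in Set.Ioc t T, Φ (s, u))
        = ∫⁻ s in Set.Ioc t T, (Set.Iio u).indicator (fun s => k s * h u) s :=
      lintegral_congr fun s => hind2 s u
    rw [this, lintegral_indicator measurableSet_Iio _,
      Measure.restrict_restrict measurableSet_Iio]
    have hseq : Set.Iio u ∩ Set.Ioc t T = Set.Ioo t u := by
      ext s
      simp only [Set.mem_inter_iff, Set.mem_Iio, Set.mem_Ioc, Set.mem_Ioo]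
      constructor
      · rintro ⟨h1, h2, h3⟩; exact ⟨h2, h1⟩
      · rintro ⟨h1, h2⟩; exact ⟨h2, h1, (h2.le.trans hu.2)⟩
    rw [hseq, setLIntegral_congr Ioo_ae_eq_Ioc,
      lintegral_mul_const' _ _ ENNReal.ofReal_ne_top]
  have step3 : ∫⁻ s in Set.Ioc t T, k s * ∫⁻ u in Set.Ioc s T, h u
      = ∫⁻ u in Set.Ioc t T, (∫⁻ s in Set.Ioc t u, k s) * h u := by
    calc ∫⁻ s in Set.Ioc t T, k s * ∫⁻ u in Set.Ioc s T, h u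
        = ∫⁻ s in Set.Ioc t T, ∫⁻ u in Set.Ioc t T, Φ (s, u) :=
          setLIntegral_congr_fun measurableSet_Ioc (fun s hs => (lhs_eq s hs).symm)
      _ = ∫⁻ u in Set.Ioc t T, ∫⁻ s in Set.Ioc t T, Φ (s, u) :=
          lintegral_lintegral_swap hΦm.aemeasurable
      _ = ∫⁻ u in Set.Ioc t T, (∫⁻ s in Set.Ioc t u, k s) * h u :=
          setLIntegral_congr_fun measurableSet_Ioc (fun u hu => rhs_eq u hu)
  have step4 : ∀ u ∈ Set.Ioc t T,
      (∫⁻ s in Set.Ioc t u, k s) ≤ ENNReal.ofReal (4 / β * Real.exp (β / 2 * A u)) := by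
    intro u hu
    have hki : IntegrableOn (fun s => 2 * Real.exp (β / 2 * A s) * α s ^ 2) (Set.Ioc t u) :=
      ((continuous_const.mul (Real.continuous_exp.comp (continuous_const.mul hAc))).mul
        (hαc.pow 2)).integrableOn_Ioc
    have e1 : (∫⁻ s in Set.Ioc t u, k s)
        = ENNReal.ofReal (∫ s in Set.Ioc t u, 2 * Real.exp (β / 2 * A s) * α s ^ 2) :=
      (ofReal_integral_eq_lintegral_ofReal hki
        ((ae_restrict_iff' measurableSet_Ioc).2 (.of_forall fun s _ => by positivity))).symm
    rw [e1]
    apply ENNReal.ofReal_le_ofReal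
    have e2 : (∫ s in Set.Ioc t u, 2 * Real.exp (β / 2 * A s) * α s ^ 2)
        = ∫ s in t..u, 2 * Real.exp (β / 2 * A s) * α s ^ 2 := by
      rw [intervalIntegral.integral_of_le hu.1.le]
    have e3 : (∫ s in t..u, 2 * Real.exp (β / 2 * A s) * α s ^ 2)
        = 2 * ∫ s in t..u, Real.exp (β / 2 * A s) * α s ^ 2 := by
      rw [← intervalIntegral.integral_const_mul]
      congr 1; funext s; ring
    rw [e2, e3, expA_integral α A hαc hA' (β / 2) (by positivity) t u]
    have hβ2 : (1:ℝ) / (β / 2) = 2 / β := by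
      field_simp
    rw [hβ2]
    have hexp : 0 < Real.exp (β / 2 * A t) := Real.exp_pos _
    have h4β : 0 < 4 / β := by positivity
    have hkey : 2 * (2 / β * (Real.exp (β / 2 * A u) - Real.exp (β / 2 * A t)))
        = 4 / β * Real.exp (β / 2 * A u) - 4 / β * Real.exp (β / 2 * A t) := by ring
    rw [hkey]
    have := mul_pos h4β hexp
    linarith
  have step5 : ∫⁻ u in Set.Ioc t T, (∫⁻ s in Set.Ioc t u, k s) * h u
      ≤ ENNReal.ofReal (4 / β) * ∫⁻ u in Set.Ioc t T, ENNReal.ofReal (R u) := by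
    have hmono : ∫⁻ u in Set.Ioc t T, (∫⁻ s in Set.Ioc t u, k s) * h u
        ≤ ∫⁻ u in Set.Ioc t T, ENNReal.ofReal (4 / β) * ENNReal.ofReal (R u) := by
      refine setLIntegral_mono' measurableSet_Ioc (fun u hu => ?_)
      have hb := step4 u hu
      calc (∫⁻ s in Set.Ioc t u, k s) * h u
          ≤ ENNReal.ofReal (4 / β * Real.exp (β / 2 * A u)) * h u :=
            mul_le_mul_left hb _
        _ = ENNReal.ofReal (4 / β * Real.exp (β / 2 * A u) * q2 u) := by
            rw [hhdef, ← ENNReal.ofReal_mul (by positivity)]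
        _ = ENNReal.ofReal (4 / β) * ENNReal.ofReal (R u) := by
            rw [← ENNReal.ofReal_mul (by positivity)]
            congr 1
            show 4 / β * Real.exp (β / 2 * A u) * (Real.exp (β / 2 * A u) * f u ^ 2 / α u ^ 2)
              = 4 / β * (Real.exp (β * A u) * f u ^ 2 / α u ^ 2)
            rw [show Real.exp (β * A u) = Real.exp (β / 2 * A u) * Real.exp (β / 2 * A u) by
              rw [← Real.exp_add]; ring_nf]
            ring
    refine hmono.trans_eq ?_
    rw [lintegral_const_mul' _ _ ENNReal.ofReal_ne_top]
  have step6 : ∫⁻ u in Set.Ioc t T, ENNReal.ofReal (R u)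
      = ENNReal.ofReal (∫ u in Set.Ioc t T, R u) :=
    (ofReal_integral_eq_lintegral_ofReal h1
      ((ae_restrict_iff' measurableSet_Ioc).2 (.of_forall fun u _ => hRnn u))).symm
  have hRJnn : 0 ≤ ∫ u in Set.Ioc t T, R u :=
    setIntegral_nonneg measurableSet_Ioc fun u _ => hRnn u
  have hfin : ENNReal.ofReal (4 / β) * ENNReal.ofReal (∫ u in Set.Ioc t T, R u) ≠ ⊤ :=
    ENNReal.mul_ne_top ENNReal.ofReal_ne_top ENNReal.ofReal_ne_top
  have chain : ∫⁻ s in Set.Ioc t T, ENNReal.ofReal (L s)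
      ≤ ENNReal.ofReal (4 / β) * ENNReal.ofReal (∫ u in Set.Ioc t T, R u) := by
    rw [← step6]
    exact step2.trans (step3 ▸ step5)
  rw [step1]
  calc (∫⁻ s in Set.Ioc t T, ENNReal.ofReal (L s)).toReal
      ≤ (ENNReal.ofReal (4 / β) * ENNReal.ofReal (∫ u in Set.Ioc t T, R u)).toReal :=
        ENNReal.toReal_mono hfin chain
    _ = 4 / β * ∫ u in Set.Ioc t T, R u := by
        rw [← ENNReal.ofReal_mul (by positivity), ENNReal.toReal_ofReal (by positivity)]

theorem stmt9 (T δ β : ℝ) (hT : 0 ≤ T) (hδ : 0 < δ) (hβ : 0 < β)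
    (α : ℝ → ℝ) (hαc : Continuous α) (hαlb : ∀ s, Real.sqrt δ ≤ α s)
    (A : ℝ → ℝ) (hA : ∀ t, A t = ∫ u in (0:ℝ)..t, (α u) ^ 2)
    (g : ℝ → ℝ → ℝ) (hg : Measurable (Function.uncurry g))
    (hgi : IntegrableOn
      (fun q : ℝ × ℝ => Real.exp (β * A q.2) * (g q.1 q.2) ^ 2 / (α q.2) ^ 2)
      {q : ℝ × ℝ | 0 ≤ q.1 ∧ q.1 ≤ q.2 ∧ q.2 ≤ T})
    (hout1 : ∀ t ∈ Set.Icc (0:ℝ) T, IntegrableOn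
      (fun s => Real.exp (β * A s) * (∫ u in s..T, g t u) ^ 2 * (β * (α s) ^ 2)) (Set.Icc t T))
    (hout2 : IntegrableOn
      (fun t => ∫ s in t..T, Real.exp (β * A s) * (∫ u in s..T, g t u) ^ 2 * (β * (α s) ^ 2))
      (Set.Icc 0 T))
    (hout3 : IntegrableOn
      (fun t => ∫ s in t..T, Real.exp (β * A s) * (g t s) ^ 2 / (α s) ^ 2) (Set.Icc 0 T)) :
    (∫ t in (0:ℝ)..T, ∫ s in t..T, Real.exp (β * A s) * (∫ u in s..T, g t u) ^ 2 * (β * (α s) ^ 2))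
      ≤ (4 / β) * ∫ t in (0:ℝ)..T, ∫ s in t..T, Real.exp (β * A s) * (g t s) ^ 2 / (α s) ^ 2 := by
  have hδ0 : 0 < Real.sqrt δ := Real.sqrt_pos.2 hδ
  have hα0 : ∀ s, 0 < α s := fun s => hδ0.trans_le (hαlb s)
  have hα2c : Continuous fun u : ℝ => α u ^ 2 := hαc.pow 2
  have hA' : ∀ s, HasDerivAt A (α s ^ 2) s := by
    intro s
    have h0 : HasDerivAt (fun u => ∫ x in (0:ℝ)..u, α x ^ 2) (α s ^ 2) s :=
      intervalIntegral.integral_hasDerivAt_right (hα2c.intervalIntegrable 0 s)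
        (hα2c.stronglyMeasurableAtFilter _ _) hα2c.continuousAt
    exact h0.congr_of_eventuallyEq (Filter.Eventually.of_forall hA)
  have hA0 : ∀ s, 0 ≤ s → 0 ≤ A s := fun s hs => by
    rw [hA s]
    exact intervalIntegral.integral_nonneg hs fun u _ => sq_nonneg _
  have hAc : Continuous A := by
    rw [continuous_iff_continuousAt]; exact fun s => (hA' s).continuousAt
  set S : Set (ℝ × ℝ) := {q : ℝ × ℝ | 0 ≤ q.1 ∧ q.1 ≤ q.2 ∧ q.2 ≤ T} with hSdef
  have hSm : MeasurableSet S := by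
    have : S = {q : ℝ × ℝ | 0 ≤ q.1} ∩ ({q : ℝ × ℝ | q.1 ≤ q.2} ∩ {q : ℝ × ℝ | q.2 ≤ T}) := by
      ext q; simp [hSdef, Set.mem_setOf_eq, and_assoc]
    rw [this]
    exact (measurableSet_le measurable_const measurable_fst).inter
      ((measurableSet_le measurable_fst measurable_snd).inter
        (measurableSet_le measurable_snd measurable_const))
  set G : ℝ × ℝ → ℝ := fun q => Real.exp (β * A q.2) * g q.1 q.2 ^ 2 / α q.2 ^ 2 with hGdef
  have hind : Integrable (S.indicator G) := (integrable_indicator_iff hSm).2 hgi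
  have hind' : Integrable (S.indicator G) ((volume : Measure ℝ).prod (volume : Measure ℝ)) := by
    rwa [← MeasureTheory.Measure.volume_eq_prod]
  have hslice : ∀ᵐ t : ℝ, Integrable (fun s => S.indicator G (t, s)) := hind'.prod_right_ae
  -- rewrite the goal
  rw [show (4 / β) * ∫ t in (0:ℝ)..T, ∫ s in t..T, Real.exp (β * A s) * (g t s) ^ 2 / (α s) ^ 2
      = ∫ t in (0:ℝ)..T, (4 / β) *
          ∫ s in t..T, Real.exp (β * A s) * (g t s) ^ 2 / (α s) ^ 2 from
    (intervalIntegral.integral_const_mul _ _).symm]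
  have hf1 : IntervalIntegrable
      (fun t => ∫ s in t..T, Real.exp (β * A s) * (∫ u in s..T, g t u) ^ 2 * (β * (α s) ^ 2))
      volume 0 T := (intervalIntegrable_iff_integrableOn_Icc_of_le hT).2 hout2
  have hf2 : IntervalIntegrable
      (fun t => (4 / β) * ∫ s in t..T, Real.exp (β * A s) * (g t s) ^ 2 / (α s) ^ 2)
      volume 0 T :=
    (intervalIntegrable_iff_integrableOn_Icc_of_le hT).2 (hout3.const_mul _)
  refine intervalIntegral.integral_mono_ae_restrict hT hf1 hf2 ?_
  have hae : ∀ᵐ t ∂(volume.restrict (Set.Icc (0:ℝ) T)),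
      Integrable (fun s => S.indicator G (t, s)) := ae_restrict_of_ae hslice
  filter_upwards [ae_restrict_mem measurableSet_Icc, hae] with t htmem hsl
  obtain ⟨ht0, htT⟩ := htmem
  have hslice_eq : (fun s => S.indicator G (t, s))
      = (Set.Icc t T).indicator (fun s => G (t, s)) := by
    funext s
    by_cases hmem : s ∈ Set.Icc t T
    · rw [Set.indicator_of_mem (by exact ⟨ht0, hmem.1, hmem.2⟩) G,
        Set.indicator_of_mem hmem]
    · rw [Set.indicator_of_notMem (fun hc => hmem ⟨hc.2.1, hc.2.2⟩) G,
        Set.indicator_of_notMem hmem]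
  have h1 : IntegrableOn (fun s => Real.exp (β * A s) * g t s ^ 2 / α s ^ 2) (Set.Ioc t T) := by
    have := (integrable_indicator_iff measurableSet_Icc).1 (hslice_eq ▸ hsl)
    exact this.mono_set Set.Ioc_subset_Icc_self
  have hL : IntegrableOn
      (fun s => Real.exp (β * A s) * (∫ u in s..T, g t u) ^ 2 * (β * α s ^ 2))
      (Set.Ioc t T) := (hout1 t ⟨ht0, htT⟩).mono_set Set.Ioc_subset_Icc_self
  exact inner_bound T β hβ α hαc hα0 A hA' hA0 (g t) hg.of_uncurry_left t ht0 htT h1 hL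
end

section
/- Define f : ℝ → [0,∞) by f(x) = 0 for x = 0, f(x) = |x|·(ln(1 + |x|^{-1}))^{1/2} for 0 < |x| < δ, and f(x) = δ·(ln(1 + δ^{-1}))^{1/2} for |x| ≥ δ, where δ ∈ (0,1). Define ρ : [0,∞) → [0,∞) by ρ(0)=0, ρ(x) = x ln(1 + x^{-1}) for 0 < x < 1, ρ(x) = ln 2 for x ≥ 1. Then for all y, ȳ ∈ ℝ: |f(y) - f(ȳ)| ≤ (ρ(|y - ȳ|²))^{1/2}. -/
noncomputable def rho (x : ℝ) : ℝ :=
  if x ≤ 0 then 0 else if x < 1 then x * Real.log (1 + 1 / x) else Real.log 2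

noncomputable def f (δ : ℝ) (x : ℝ) : ℝ :=
  if x = 0 then 0
  else if |x| < δ then |x| * Real.sqrt (Real.log (1 + 1 / |x|))
  else δ * Real.sqrt (Real.log (1 + 1 / δ))

open Real

lemma aux_log_nonneg {x : ℝ} (hx : 0 ≤ x) : 0 ≤ Real.log (1 + 1 / x) :=
  Real.log_nonneg (by nlinarith [one_div_nonneg.2 hx])

lemma aux_inv_le_log {q : ℝ} (hq : 0 < q) : 1 / (q + 1) ≤ Real.log (1 + 1 / q) := by
  have h := Real.one_sub_inv_le_log_of_pos (show (0:ℝ) < 1 + 1/q by positivity)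
  have he : 1 - (1 + 1/q)⁻¹ = 1/(q+1) := by
    rw [show (1:ℝ) + 1/q = (q+1)/q by field_simp]
    rw [inv_div]
    field_simp
    ring
  linarith [he ▸ h]

lemma aux_log_diff_le {p q : ℝ} (hp : 0 < p) (hpq : p ≤ q) :
    Real.log (1 + 1 / p) - Real.log (1 + 1 / q) ≤ (q - p) / ((q + 1) * p) := by
  have hq : 0 < q := lt_of_lt_of_le hp hpq
  have h1 : Real.log (1 + 1/p) - Real.log (1 + 1/q)
      = Real.log ((1 + 1/p) / (1 + 1/q)) := by
    rw [Real.log_div (by positivity) (by positivity)]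
  have h2 := Real.log_le_sub_one_of_pos (show (0:ℝ) < (1 + 1/p) / (1 + 1/q) by positivity)
  have h3 : (1 + 1/p) / (1 + 1/q) - 1 = (q - p) / ((q + 1) * p) := by
    field_simp
    ring
  linarith [h1 ▸ (h3 ▸ h2)]

/-- monotonicity of `x ↦ x log (1 + 1/x)` on `(0, 1]` -/
lemma psi_mono {p q : ℝ} (hp : 0 < p) (hpq : p ≤ q) (hq1 : q ≤ 1) :
    p * Real.log (1 + 1 / p) ≤ q * Real.log (1 + 1 / q) := by
  have hq : 0 < q := lt_of_lt_of_le hp hpq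
  have h1 := aux_log_diff_le hp hpq
  have h1' : p * (Real.log (1 + 1/p) - Real.log (1 + 1/q)) ≤ (q - p) / (q + 1) := by
    have : p * ((q - p) / ((q + 1) * p)) = (q - p) / (q + 1) := by field_simp
    nlinarith [mul_le_mul_of_nonneg_left h1 hp.le]
  have h2 := aux_inv_le_log hq
  have h2' : (q - p) / (q + 1) ≤ (q - p) * Real.log (1 + 1/q) := by
    rw [div_eq_mul_one_div]
    exact mul_le_mul_of_nonneg_left h2 (by linarith)
  nlinarith
-- g t := t * sqrt (log (1+1/t))

/-- monotonicity of `x ↦ x^2 log (1 + 1/x)` on `(0, 1]` -/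
lemma phi_mono {p q : ℝ} (hp : 0 < p) (hpq : p ≤ q) (hq1 : q ≤ 1) :
    p^2 * Real.log (1 + 1 / p) ≤ q^2 * Real.log (1 + 1 / q) := by
  have hq : 0 < q := lt_of_lt_of_le hp hpq
  have h1 := aux_log_diff_le hp hpq
  have h1' : p^2 * (Real.log (1 + 1/p) - Real.log (1 + 1/q)) ≤ p * (q - p) / (q + 1) := by
    have he : p^2 * ((q - p) / ((q + 1) * p)) = p * (q - p) / (q + 1) := by field_simp
    nlinarith [mul_le_mul_of_nonneg_left h1 (sq_nonneg p)]
  have h2 := aux_inv_le_log hq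
  have h2' : p * (q - p) / (q + 1) ≤ p * (q - p) * Real.log (1 + 1/q) := by
    rw [div_eq_mul_one_div]
    exact mul_le_mul_of_nonneg_left h2 (by nlinarith)
  nlinarith [mul_nonneg (show (0:ℝ) ≤ q*(q-p) by nlinarith) (aux_log_nonneg hq.le)]

lemma rho_nonneg (x : ℝ) : 0 ≤ rho x := by
  unfold rho
  split_ifs with h1 h2
  · exact le_refl 0
  · push_neg at h1
    exact mul_nonneg h1.le (aux_log_nonneg h1.le)
  · exact Real.log_nonneg (by norm_num)

lemma rho_mono {p q : ℝ} (hpq : p ≤ q) : rho p ≤ rho q := by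
  unfold rho
  split_ifs with h1 h2 h3 h4 h5
  · rfl
  · push_neg at h2
    exact mul_nonneg (by linarith) (aux_log_nonneg (by linarith))
  · exact Real.log_nonneg (by norm_num)
  · linarith
  · push_neg at h1
    exact psi_mono h1 hpq (by linarith)
  · push_neg at h1 h5
    calc p * Real.log (1 + 1/p) ≤ 1 * Real.log (1 + 1/1) := psi_mono h1 h4.le le_rfl
      _ = Real.log 2 := by norm_num
  · linarith
  · linarith
  · rfl

/-- the core function: `g t = t √(log(1+1/t))` -/
noncomputable def gg (t : ℝ) : ℝ := t * Real.sqrt (Real.log (1 + 1 / t))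

lemma gg_eq_sqrt {t : ℝ} (ht : 0 ≤ t) : gg t = Real.sqrt (t^2 * Real.log (1 + 1 / t)) := by
  rw [gg, Real.sqrt_mul (sq_nonneg t), Real.sqrt_sq ht]

lemma gg_mono {p q : ℝ} (hp : 0 ≤ p) (hpq : p ≤ q) (hq1 : q ≤ 1) : gg p ≤ gg q := by
  rcases eq_or_lt_of_le hp with h | h
  · have h0 : gg p = 0 := by rw [← h]; simp [gg]
    rw [h0]
    exact mul_nonneg (hp.trans hpq) (Real.sqrt_nonneg _)
  · rw [gg_eq_sqrt hp, gg_eq_sqrt (hp.trans hpq)]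
    exact Real.sqrt_le_sqrt (phi_mono h hpq hq1)

lemma log_anti {s t : ℝ} (hs : 0 < s) (hst : s ≤ t) :
    Real.log (1 + 1 / t) ≤ Real.log (1 + 1 / s) := by
  have ht : 0 < t := lt_of_lt_of_le hs hst
  exact Real.log_le_log (by positivity) (by nlinarith [one_div_le_one_div_of_le hs hst])

/-- subadditivity of g -/
lemma gg_subadd {b u : ℝ} (hb : 0 ≤ b) (hu : 0 ≤ u) : gg (b + u) ≤ gg b + gg u := by
  unfold gg
  have key : ∀ s t : ℝ, 0 ≤ s → s ≤ t →
      s * Real.sqrt (Real.log (1 + 1/t)) ≤ s * Real.sqrt (Real.log (1 + 1/s)) := by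
    intro s t hs hst
    rcases eq_or_lt_of_le hs with h | h
    · simp [← h]
    · exact mul_le_mul_of_nonneg_left (Real.sqrt_le_sqrt (log_anti h hst)) hs
  calc (b + u) * Real.sqrt (Real.log (1 + 1/(b+u)))
      = b * Real.sqrt (Real.log (1 + 1/(b+u))) + u * Real.sqrt (Real.log (1 + 1/(b+u))) := by
        ring
    _ ≤ b * Real.sqrt (Real.log (1 + 1/b)) + u * Real.sqrt (Real.log (1 + 1/u)) := by
        gcongr ?_ + ?_
        · exact key b (b+u) hb (by linarith)
        · exact key u (b+u) hu (by linarith)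

lemma gg_le_sqrt_rho {u : ℝ} (hu : 0 ≤ u) (hu1 : u < 1) :
    gg u ≤ Real.sqrt (rho (u^2)) := by
  rcases eq_or_lt_of_le hu with h | h
  · simp [gg, ← h, Real.sqrt_nonneg]
  · have h2 : ¬ (u^2 ≤ 0) := by push_neg; positivity
    have h3 : u^2 < 1 := by nlinarith
    rw [gg_eq_sqrt hu]
    apply Real.sqrt_le_sqrt
    unfold rho
    rw [if_neg h2, if_pos h3]
    have : Real.log (1 + 1/u) ≤ Real.log (1 + 1/u^2) := by
      apply Real.log_le_log (by positivity)
      have : 1/u ≤ 1/u^2 := by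
        rw [div_le_div_iff₀ (by positivity) (by positivity)]
        nlinarith
      linarith
    nlinarith [sq_nonneg u]

lemma f_eq_gg {δ : ℝ} (hδ0 : 0 < δ) (x : ℝ) : f δ x = gg (min |x| δ) := by
  unfold f gg
  split_ifs with h1 h2
  · simp [h1, hδ0.le]
  · rw [min_eq_left h2.le]
  · rw [min_eq_right (le_of_not_gt h2)]

lemma min_lip {s t c : ℝ} : |min s c - min t c| ≤ |s - t| := by
  rcases le_total s c with h1 | h1 <;> rcases le_total t c with h2 | h2 <;>
    simp [min_eq_left, min_eq_right, h1, h2] <;>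
    rw [abs_le] <;> constructor <;>
    [skip; skip; skip; skip] <;>
    cases abs_le.1 (le_refl |s - t|) <;> first | linarith [abs_nonneg (s-t), le_abs_self (s-t), neg_abs_le (s-t)] | skip
  all_goals linarith [le_abs_self (s - t), neg_abs_le (s - t)]

/-- main one-sided estimate -/
lemma key_est {δ : ℝ} (hδ0 : 0 < δ) (hδ1 : δ < 1) {a b : ℝ} (hb : 0 ≤ b) (hba : b ≤ a)
    (ha : a ≤ δ) : gg a - gg b ≤ Real.sqrt (rho ((a - b)^2)) := by
  have h1 : gg a ≤ gg b + gg (a - b) := by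
    have := gg_subadd hb (by linarith : (0:ℝ) ≤ a - b)
    rwa [show b + (a - b) = a by ring] at this
  have h2 : gg (a - b) ≤ Real.sqrt (rho ((a - b)^2)) :=
    gg_le_sqrt_rho (by linarith) (by linarith)
  linarith

theorem stmt11 (δ : ℝ) (hδ0 : 0 < δ) (hδ1 : δ < 1) :
    ∀ y ybar : ℝ, |f δ y - f δ ybar| ≤ Real.sqrt (rho ((y - ybar) ^ 2)) := by
  intro y ybar
  rw [f_eq_gg hδ0 y, f_eq_gg hδ0 ybar]
  set a := min |y| δ with ha_def
  set b := min |ybar| δ with hb_def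
  have ha0 : 0 ≤ a := le_min (abs_nonneg _) hδ0.le
  have hb0 : 0 ≤ b := le_min (abs_nonneg _) hδ0.le
  have haδ : a ≤ δ := min_le_right _ _
  have hbδ : b ≤ δ := min_le_right _ _
  have hlip : |a - b| ≤ |y - ybar| :=
    le_trans min_lip (abs_abs_sub_abs_le_abs_sub y ybar)
  have hmono : rho ((a-b)^2) ≤ rho ((y - ybar)^2) := by
    apply rho_mono
    nlinarith [sq_abs (a - b), sq_abs (y - ybar), abs_nonneg (a - b), abs_nonneg (y - ybar)]
  have hs : Real.sqrt (rho ((a-b)^2)) ≤ Real.sqrt (rho ((y - ybar)^2)) :=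
    Real.sqrt_le_sqrt hmono
  rcases le_total b a with h | h
  · have hm := gg_mono hb0 h (by linarith)
    rw [abs_of_nonneg (by linarith)]
    exact le_trans (key_est hδ0 hδ1 hb0 h haδ) hs
  · have hm := gg_mono ha0 h (by linarith)
    rw [abs_of_nonpos (by linarith)]
    have := key_est hδ0 hδ1 ha0 h hbδ
    rw [show (b - a)^2 = (a - b)^2 by ring] at this
    linarith
end
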